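/- arXiv:1609.01695 — 9 statements merged into one kernel-verified Lean document; each statement's English description precedes it below -/
import Mathlib

section
/- Let A be a ring, J a two-sided ideal of A, and τ : J → ℂ an additive, ℂ-homogeneous map satisfying τ(a*b) = τ(b*a) whenever a ∈ J and b ∈ A. If a ∈ A and a₀, a₀' are both elements of A whose images under π : A → A/J are Drazin inverses of π(a), then τ(a*a₀ - a₀*a) = τ(a*a₀' - a₀'*a). That is, the index i(a) := τ([a,a₀]) is well defined independently of the chosen Drazin inverse modulo J. -/
/-- `c` is a Drazin inverse of `b` in a ring. -/
def IsDrazinInverse {R : Type*} [Ring R] (b c : R) : Prop :=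
  b * c = c * b ∧ c * b * c = c ∧ ∃ k : ℕ, b ^ (k + 1) * c = b ^ k

private lemma drazin_pow_mono {R : Type*} [Ring R] {b c : R} {k : ℕ}
    (hk : b ^ (k + 1) * c = b ^ k) (n : ℕ) (hn : k ≤ n) :
    b ^ (n + 1) * c = b ^ n := by
  obtain ⟨j, rfl⟩ := Nat.exists_eq_add_of_le hn
  calc b ^ (k + j + 1) * c = b ^ j * (b ^ (k + 1) * c) := by
        rw [← mul_assoc, ← pow_add]; ring_nf
    _ = b ^ (k + j) := by rw [hk, ← pow_add]; ring_nf

private lemma drazin_c_pow {R : Type*} [Ring R] {b c : R}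
    (hcomm : b * c = c * b) (hcbc : c * b * c = c) (m : ℕ) :
    c ^ (m + 1) * b ^ m = c := by
  induction m with
  | zero => simp
  | succ m ih =>
    have h2 : c ^ 2 * b = c := by
      calc c ^ 2 * b = c * (c * b) := by rw [sq, mul_assoc]
        _ = c * (b * c) := by rw [hcomm]
        _ = c * b * c := by rw [mul_assoc]
        _ = c := hcbc
    calc c ^ (m + 1 + 1) * b ^ (m + 1)
        = c * c ^ (m + 1) * (b ^ m * b) := by rw [pow_succ' c (m + 1), pow_succ b m]
    _ = c * (c ^ (m + 1) * b ^ m) * b := by noncomm_ring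
    _ = c * c * b := by rw [ih]
    _ = c ^ 2 * b := by rw [sq]
    _ = c := h2

/-- The Drazin inverse is unique. -/
theorem drazin_unique {R : Type*} [Ring R] {b c c' : R}
    (h : IsDrazinInverse b c) (h' : IsDrazinInverse b c') : c = c' := by
  obtain ⟨hc1, hc2, k, hk⟩ := h
  obtain ⟨hc1', hc2', k', hk'⟩ := h'
  set n := max k k' with hn
  have hbn : b ^ (n + 1) * c = b ^ n := drazin_pow_mono hk n (le_max_left _ _)
  have hbn' : b ^ (n + 1) * c' = b ^ n := drazin_pow_mono hk' n (le_max_right _ _)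
  have hCbc : Commute c b := hc1.symm
  have hCbc' : Commute c' b := hc1'.symm
  -- c = c * b * c'
  have key : c = c * b * c' := by
    have hpow : (c * b) ^ (n + 1) = c ^ (n + 1) * b ^ (n + 1) := hCbc.mul_pow (n + 1)
    have hidem : IsIdempotentElem (c * b) := by
      show c * b * (c * b) = c * b
      calc c * b * (c * b) = (c * b * c) * b := by noncomm_ring
        _ = c * b := by rw [hc2]
    calc c = c ^ (n + 1) * b ^ n := (drazin_c_pow hc1 hc2 n).symm
      _ = c ^ (n + 1) * (b ^ (n + 1) * c') := by rw [hbn']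
      _ = (c ^ (n + 1) * b ^ (n + 1)) * c' := by rw [mul_assoc]
      _ = (c * b) ^ (n + 1) * c' := by rw [hpow]
      _ = c * b * c' := by rw [IsIdempotentElem.pow_succ_eq n hidem]
  -- b * c' = (b * c) * (b * c')
  have key2 : b * c' = (b * c) * (b * c') := by
    have hidem' : IsIdempotentElem (b * c') := by
      show b * c' * (b * c') = b * c'
      calc b * c' * (b * c') = b * (c' * b * c') := by noncomm_ring
        _ = b * c' := by rw [hc2']
    have hpow' : (b * c') ^ (n + 1) = b ^ (n + 1) * c' ^ (n + 1) :=
      hCbc'.symm.mul_pow (n + 1)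
    have hbc : c * b ^ (n + 2) = b ^ (n + 2) * c :=
      (hCbc.pow_right (n + 2)).symm.eq.symm
    calc b * c' = (b * c') ^ (n + 1) := (IsIdempotentElem.pow_succ_eq n hidem').symm
      _ = b ^ (n + 1) * c' ^ (n + 1) := hpow'
      _ = b * (b ^ (n + 1) * c) * c' ^ (n + 1) := by rw [hbn, pow_succ']
      _ = b ^ (n + 2) * c * c' ^ (n + 1) := by
          rw [show b ^ (n + 2) = b * b ^ (n + 1) from (pow_succ' b (n + 1))]
          noncomm_ring
      _ = c * b ^ (n + 2) * c' ^ (n + 1) := by rw [← hbc]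
      _ = c * b * (b ^ (n + 1) * c' ^ (n + 1)) := by
          rw [show b ^ (n + 2) = b * b ^ (n + 1) from (pow_succ' b (n + 1))]
          noncomm_ring
      _ = c * b * (b * c') ^ (n + 1) := by rw [hpow']
      _ = c * b * (b * c') := by rw [IsIdempotentElem.pow_succ_eq n hidem']
      _ = (b * c) * (b * c') := by rw [hc1]
  have haux : b * c * (b * c') = b * c := by
    rw [show b * c * (b * c') = b * (c * b * c') from by noncomm_ring, ← key]
  have hpq : b * c' = b * c := by rw [key2, haux]
  calc c = c * b * c' := key
    _ = b * c * c' := by rw [hc1]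
    _ = b * c' * c' := by rw [hpq]
    _ = c' * b * c' := by rw [hc1']
    _ = c' := hc2'

/-- The index `τ([a, a₀])` of a B-Fredholm element is independent of the chosen
Drazin inverse modulo the ideal `J`. -/
theorem index_well_defined
    {A : Type*} [Ring A] [Algebra ℂ A] (J : TwoSidedIdeal A)
    (π : A →+* J.ringCon.Quotient) (hπ : π = RingCon.mk' J.ringCon)
    (τ : A → ℂ)
    (hadd : ∀ x ∈ J, ∀ y ∈ J, τ (x + y) = τ x + τ y)
    (hsmul : ∀ (α : ℂ), ∀ x ∈ J, τ (α • x) = α * τ x)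
    (hcomm : ∀ x ∈ J, ∀ b : A, τ (x * b) = τ (b * x))
    (a a₀ a₀' : A)
    (h : IsDrazinInverse (π a) (π a₀)) (h' : IsDrazinInverse (π a) (π a₀')) :
    τ (a * a₀ - a₀ * a) = τ (a * a₀' - a₀' * a) := by
  subst hπ
  have heq : J.ringCon a₀ a₀' := J.ringCon.eq.mp (drazin_unique h h')
  have hd : a₀ - a₀' ∈ J := (J.rel_iff _ _).mp heq
  set d := a₀ - a₀' with hdd
  have hx : a * a₀' - a₀' * a ∈ J := by
    refine (J.rel_iff _ _).mp (J.ringCon.eq.mp ?_)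
    show (RingCon.mk' J.ringCon) (a * a₀') = (RingCon.mk' J.ringCon) (a₀' * a)
    rw [map_mul, map_mul, h'.1]
  have had : a * d ∈ J := J.mul_mem_left _ _ hd
  have hda : d * a ∈ J := J.mul_mem_right _ _ hd
  have hnd : (-1 : ℂ) • (d * a) ∈ J := by
    rw [neg_one_smul]; exact neg_mem hda
  have hτd : τ (a * d - d * a) = 0 := by
    have e1 : a * d - d * a = a * d + (-1 : ℂ) • (d * a) := by
      rw [neg_one_smul, sub_eq_add_neg]
    rw [e1, hadd _ had _ hnd, hsmul _ _ hda, hcomm d hd a]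
    ring
  have hsum : a * a₀ - a₀ * a = (a * a₀' - a₀' * a) + (a * d - d * a) := by
    rw [hdd]; noncomm_ring
  rw [hsum, hadd _ hx _ (J.sub_mem had hda), hτd, add_zero]
end

section
/- Let X be a Banach space and T a bounded linear operator on X that decomposes as X = M ⊕ N with T(M) ⊆ M, T(N) ⊆ N, T restricted to N nilpotent, and T restricted to M Fredholm. Let T₀ be an inverse of T|_M modulo finite-rank operators on M, and S = T₀ ⊕ 0. Then S is a Drazin inverse of T modulo the ideal of finite-rank operators on X, i.e., in the quotient of bounded operators by finite-rank operators, the class of S is a Drazin inverse of the class of T. -/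
/-- A bounded operator has finite rank if its range is finite dimensional. -/
def IsFiniteRank {X : Type*} [NormedAddCommGroup X] [NormedSpace ℂ X]
    (T : X →L[ℂ] X) : Prop :=
  FiniteDimensional ℂ (LinearMap.range (T : X →ₗ[ℂ] X))

def IsFiniteRank' {M : Type*} [NormedAddCommGroup M] [NormedSpace ℂ M]
    (T : M →L[ℂ] M) : Prop :=
  FiniteDimensional ℂ (LinearMap.range (T : M →ₗ[ℂ] M))

/-- Finite-rank operators are closed under difference. -/
lemma IsFiniteRank'.sub {M : Type*} [NormedAddCommGroup M] [NormedSpace ℂ M]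
    {f g : M →L[ℂ] M} (hf : IsFiniteRank' f) (hg : IsFiniteRank' g) :
    IsFiniteRank' (f - g) := by
  haveI : FiniteDimensional ℂ (LinearMap.range (f : M →ₗ[ℂ] M)) := hf
  haveI : FiniteDimensional ℂ (LinearMap.range (g : M →ₗ[ℂ] M)) := hg
  have hle : LinearMap.range ((f - g : M →L[ℂ] M) : M →ₗ[ℂ] M) ≤
      LinearMap.range (f : M →ₗ[ℂ] M) ⊔ LinearMap.range (g : M →ₗ[ℂ] M) := by
    rintro y ⟨x, rfl⟩
    exact Submodule.sub_mem _ (Submodule.mem_sup_left ⟨x, rfl⟩)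
      (Submodule.mem_sup_right ⟨x, rfl⟩)
  exact Submodule.finiteDimensional_of_le hle

/-- Post-composition preserves finite rank. -/
lemma IsFiniteRank'.comp_left {M : Type*} [NormedAddCommGroup M] [NormedSpace ℂ M]
    {f : M →L[ℂ] M} (g : M →L[ℂ] M) (hf : IsFiniteRank' f) :
    IsFiniteRank' (g * f) := by
  haveI : FiniteDimensional ℂ (LinearMap.range (f : M →ₗ[ℂ] M)) := hf
  haveI : FiniteDimensional ℂ ((LinearMap.range (f : M →ₗ[ℂ] M)).map
      (g : M →ₗ[ℂ] M)) := Module.Finite.map _ _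
  have hle : LinearMap.range ((g * f : M →L[ℂ] M) : M →ₗ[ℂ] M) ≤
      (LinearMap.range (f : M →ₗ[ℂ] M)).map (g : M →ₗ[ℂ] M) := by
    rintro y ⟨x, rfl⟩
    exact ⟨f x, ⟨x, rfl⟩, rfl⟩
  exact Submodule.finiteDimensional_of_le hle

/-- An operator vanishing on `N` and acting as a finite-rank operator on `M`
(where `M` and `N` are complementary) has finite rank. -/
lemma isFiniteRank_of_compl {X : Type*} [NormedAddCommGroup X] [NormedSpace ℂ X]
    {M N : Submodule ℂ X} (hcompl : IsCompl M N)
    (A : X →L[ℂ] X) (B : M →L[ℂ] M) (hB : IsFiniteRank' B)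
    (hN : ∀ x ∈ N, A x = 0) (hM : ∀ x : M, A x = (B x : X)) :
    IsFiniteRank A := by
  haveI : FiniteDimensional ℂ (LinearMap.range (B : M →ₗ[ℂ] M)) := hB
  haveI : FiniteDimensional ℂ ((LinearMap.range (B : M →ₗ[ℂ] M)).map M.subtype) :=
    Module.Finite.map _ _
  have hle : LinearMap.range (A : X →ₗ[ℂ] X) ≤
      (LinearMap.range (B : M →ₗ[ℂ] M)).map M.subtype := by
    rintro y ⟨x, rfl⟩
    have hx : x ∈ M ⊔ N := by rw [hcompl.sup_eq_top]; trivial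
    obtain ⟨m, hm, n, hn, rfl⟩ := Submodule.mem_sup.mp hx
    have : A (m + n) = (B ⟨m, hm⟩ : X) := by
      rw [map_add, hN n hn, add_zero]
      exact hM ⟨m, hm⟩
    rw [ContinuousLinearMap.coe_coe, this]
    exact ⟨B ⟨m, hm⟩, ⟨⟨m, hm⟩, rfl⟩, rfl⟩
  exact Submodule.finiteDimensional_of_le hle

/-- If `X = M ⊕ N` with `T|_N` nilpotent and `T|_M` Fredholm with parametrix `T₀`,
then `S = T₀ ⊕ 0` is a Drazin inverse of `T` modulo finite-rank operators. -/
theorem drazin_inverse_of_bFredholm_decomposition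
    {X : Type*} [NormedAddCommGroup X] [NormedSpace ℂ X] [CompleteSpace X]
    (T : X →L[ℂ] X) (M N : Submodule ℂ X)
    (hMclosed : IsClosed (M : Set X)) (hNclosed : IsClosed (N : Set X))
    (hcompl : IsCompl M N)
    (hTM : ∀ x ∈ M, T x ∈ M) (hTN : ∀ x ∈ N, T x ∈ N)
    -- `T|_N` is nilpotent
    (hnil : ∃ p : ℕ, ∀ x ∈ N, (T ^ p) x = 0)
    -- `TM` is the restriction `T|_M`, and it is Fredholm
    (TM : M →L[ℂ] M) (hTMdef : ∀ x : M, (TM x : X) = T x)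
    (hker : FiniteDimensional ℂ (LinearMap.ker (TM : M →ₗ[ℂ] M)))
    (hclosed : IsClosed (LinearMap.range (TM : M →ₗ[ℂ] M) : Set M))
    (hcoker : FiniteDimensional ℂ (M ⧸ LinearMap.range (TM : M →ₗ[ℂ] M)))
    -- `T₀` is an inverse of `T|_M` modulo the finite-rank operators on `M`
    (T₀ : M →L[ℂ] M)
    (hT₀₁ : IsFiniteRank' (TM * T₀ - 1)) (hT₀₂ : IsFiniteRank' (T₀ * TM - 1))
    -- `S = T₀ ⊕ 0`
    (S : X →L[ℂ] X) (hSM : ∀ x : M, S x = (T₀ x : X)) (hSN : ∀ x ∈ N, S x = 0) :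
    -- the class of `S` is a Drazin inverse of the class of `T` modulo finite rank
    IsFiniteRank (T * S - S * T) ∧ IsFiniteRank (S * T * S - S) ∧
      ∃ k : ℕ, IsFiniteRank (T ^ (k + 1) * S - T ^ k) := by
  obtain ⟨p, hp⟩ := hnil
  -- powers of T restricted to M
  have hpow : ∀ (j : ℕ) (x : M), (T ^ j) (x : X) = ((TM ^ j) x : X) := by
    intro j
    induction j with
    | zero => intro x; simp
    | succ j ih =>
      intro x
      have : (T ^ (j + 1)) (x : X) = (T ^ j) (T (x : X)) := by
        rw [pow_succ, ContinuousLinearMap.mul_apply]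
      rw [this, ← hTMdef x, ih (TM x), pow_succ, ContinuousLinearMap.mul_apply]
  refine ⟨?_, ?_, ⟨p, ?_⟩⟩
  · -- T S - S T
    refine isFiniteRank_of_compl hcompl _ ((TM * T₀ - 1) - (T₀ * TM - 1))
      (hT₀₁.sub hT₀₂) ?_ ?_
    · intro x hx
      simp only [ContinuousLinearMap.sub_apply, ContinuousLinearMap.mul_apply]
      rw [hSN x hx, map_zero, hSN _ (hTN x hx), sub_zero]
    · intro x
      have h1 : (T * S) (x : X) = ((TM (T₀ x)) : X) := by
        rw [ContinuousLinearMap.mul_apply, hSM x, hTMdef]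
      have h2 : (S * T) (x : X) = ((T₀ (TM x)) : X) := by
        rw [ContinuousLinearMap.mul_apply, ← hTMdef x, hSM]
      simp only [ContinuousLinearMap.sub_apply, h1, h2,
        ContinuousLinearMap.mul_apply, ContinuousLinearMap.one_apply]
      push_cast
      abel
  · -- S T S - S
    refine isFiniteRank_of_compl hcompl _ (T₀ * (TM * T₀ - 1))
      (hT₀₁.comp_left T₀) ?_ ?_
    · intro x hx
      simp only [ContinuousLinearMap.sub_apply, ContinuousLinearMap.mul_apply]
      rw [hSN x hx, map_zero, map_zero, sub_zero]
    · intro x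
      have h1 : (S * T * S) (x : X) = ((T₀ (TM (T₀ x))) : X) := by
        rw [ContinuousLinearMap.mul_apply, ContinuousLinearMap.mul_apply,
          hSM x, ← hTMdef (T₀ x), hSM]
      simp only [ContinuousLinearMap.sub_apply, h1, hSM x,
        ContinuousLinearMap.mul_apply, ContinuousLinearMap.one_apply,
        map_sub, Submodule.coe_sub]
  · -- T^(p+1) S - T^p
    refine isFiniteRank_of_compl hcompl _ (TM ^ p * (TM * T₀ - 1))
      (hT₀₁.comp_left (TM ^ p)) ?_ ?_
    · intro x hx
      simp only [ContinuousLinearMap.sub_apply, ContinuousLinearMap.mul_apply]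
      rw [hSN x hx, map_zero, hp x hx, sub_zero]
    · intro x
      have h1 : (T ^ (p + 1) * S) (x : X) = (((TM ^ (p + 1)) (T₀ x)) : X) := by
        rw [ContinuousLinearMap.mul_apply, hSM x, hpow]
      rw [ContinuousLinearMap.sub_apply, h1, hpow p x]
      simp only [pow_succ, ContinuousLinearMap.mul_apply,
        ContinuousLinearMap.sub_apply, ContinuousLinearMap.one_apply,
        map_sub, Submodule.coe_sub]
end

section
/- Fedosov's trace formula: if T is a Fredholm operator on a Banach space X and S ∈ L(X) satisfies TS - I and ST - I finite-rank, then TS - ST is finite-rank and tr(TS - ST) = ind(T) = dim ker T - codim ran T. -/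
open LinearMap

/-- The trace of a finite-rank bounded operator, computed as the trace of its
restriction to its (finite-dimensional) range. -/
noncomputable def trF {X : Type*} [NormedAddCommGroup X] [NormedSpace ℂ X]
    (T : X →L[ℂ] X) : ℂ :=
  LinearMap.trace ℂ (LinearMap.range (T : X →ₗ[ℂ] X))
    ((T : X →ₗ[ℂ] X).restrict (fun x _ => LinearMap.mem_range_self _ x))

namespace FedosovAux

variable {X : Type*} [AddCommGroup X] [Module ℂ X]

/-- Trace of `f` computed on a submodule containing its range. -/
noncomputable def trAux (f : X →ₗ[ℂ] X) (W : Submodule ℂ X) (h : range f ≤ W) : ℂ :=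
  LinearMap.trace ℂ W (f.restrict (fun x _ => h (mem_range_self f x)))

lemma trAux_congr {f g : X →ₗ[ℂ] X} (e : f = g) {W : Submodule ℂ X}
    (hf : range f ≤ W) (hg : range g ≤ W) : trAux f W hf = trAux g W hg := by
  subst e; rfl

lemma trAux_comp (A B : X →ₗ[ℂ] X) (W₁ W₂ : Submodule ℂ X)
    [FiniteDimensional ℂ W₁] [FiniteDimensional ℂ W₂]
    (hA : ∀ x ∈ W₂, A x ∈ W₁) (hB : ∀ x ∈ W₁, B x ∈ W₂)
    (h1 : range (A ∘ₗ B) ≤ W₁) (h2 : range (B ∘ₗ A) ≤ W₂) :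
    trAux (A ∘ₗ B) W₁ h1 = trAux (B ∘ₗ A) W₂ h2 := by
  have e1 : (A ∘ₗ B).restrict (fun x _ => h1 (mem_range_self _ x))
      = (A.restrict hA) ∘ₗ (B.restrict hB) := by
    ext x; rfl
  have e2 : (B ∘ₗ A).restrict (fun x _ => h2 (mem_range_self _ x))
      = (B.restrict hB) ∘ₗ (A.restrict hA) := by
    ext x; rfl
  simp only [trAux]
  rw [e1, e2]
  exact (LinearMap.trace_comp_comm' (A.restrict hA) (B.restrict hB)).symm

lemma trAux_indep (f : X →ₗ[ℂ] X) (W₁ W₂ : Submodule ℂ X)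
    [FiniteDimensional ℂ W₁] [FiniteDimensional ℂ W₂]
    (h1 : range f ≤ W₁) (h2 : range f ≤ W₂) :
    trAux f W₁ h1 = trAux f W₂ h2 := by
  haveI : FiniteDimensional ℂ (range f) := Submodule.finiteDimensional_of_le h1
  have H : ∀ (W : Submodule ℂ X), FiniteDimensional ℂ W → ∀ (h : range f ≤ W),
      trAux f W h = trAux f (range f) le_rfl := by
    intro W hWfin h
    haveI := hWfin
    have hid : range ((LinearMap.id : X →ₗ[ℂ] X) ∘ₗ f) ≤ W := by
      rwa [LinearMap.id_comp]
    have hfid : range (f ∘ₗ (LinearMap.id : X →ₗ[ℂ] X)) ≤ range f := by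
      rw [LinearMap.comp_id]
    calc trAux f W h = trAux ((LinearMap.id : X →ₗ[ℂ] X) ∘ₗ f) W hid :=
          trAux_congr (LinearMap.id_comp f).symm _ _
      _ = trAux (f ∘ₗ (LinearMap.id : X →ₗ[ℂ] X)) (range f) hfid :=
          trAux_comp LinearMap.id f W (range f) (fun x hx => h hx)
            (fun x _ => mem_range_self f x) hid hfid
      _ = trAux f (range f) le_rfl := trAux_congr (LinearMap.comp_id f) _ _
  rw [H W₁ ‹_› h1, H W₂ ‹_› h2]

lemma trAux_add (f g : X →ₗ[ℂ] X) (W : Submodule ℂ X)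
    (hf : range f ≤ W) (hg : range g ≤ W) (h : range (f + g) ≤ W) :
    trAux (f + g) W h = trAux f W hf + trAux g W hg := by
  have e : (f + g).restrict (p := W) (q := W) (fun x _ => h (mem_range_self _ x))
      = f.restrict (p := W) (q := W) (fun x _ => hf (mem_range_self f x))
        + g.restrict (p := W) (q := W) (fun x _ => hg (mem_range_self g x)) := by
    ext x; rfl
  simp only [trAux]
  rw [e, map_add]

lemma trAux_sub (f g : X →ₗ[ℂ] X) (W : Submodule ℂ X)
    (hf : range f ≤ W) (hg : range g ≤ W) (h : range (f - g) ≤ W) :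
    trAux (f - g) W h = trAux f W hf - trAux g W hg := by
  have e : (f - g).restrict (p := W) (q := W) (fun x _ => h (mem_range_self _ x))
      = f.restrict (p := W) (q := W) (fun x _ => hf (mem_range_self f x))
        - g.restrict (p := W) (q := W) (fun x _ => hg (mem_range_self g x)) := by
    ext x; rfl
  simp only [trAux]
  rw [e, map_sub]

lemma trAux_proj (W : Submodule ℂ X) [FiniteDimensional ℂ W] (π : X →ₗ[ℂ] W)
    (hπ : ∀ w : W, π (w : X) = w) (h : range (W.subtype ∘ₗ π) ≤ W) :
    trAux (W.subtype ∘ₗ π) W h = (Module.finrank ℂ W : ℂ) := by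
  have e : (W.subtype ∘ₗ π).restrict (fun x _ => h (mem_range_self _ x))
      = LinearMap.id := by
    ext x
    exact congrArg Subtype.val (hπ x)
  simp only [trAux]
  rw [e, LinearMap.trace_id]

lemma range_sub_le (f g : X →ₗ[ℂ] X) : range (f - g) ≤ range f ⊔ range g := by
  rintro x ⟨y, rfl⟩
  exact Submodule.sub_mem _ (Submodule.mem_sup_left (mem_range_self f y))
    (Submodule.mem_sup_right (mem_range_self g y))

lemma range_add_le (f g : X →ₗ[ℂ] X) : range (f + g) ≤ range f ⊔ range g := by
  rintro x ⟨y, rfl⟩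
  exact Submodule.add_mem _ (Submodule.mem_sup_left (mem_range_self f y))
    (Submodule.mem_sup_right (mem_range_self g y))

end FedosovAux

open FedosovAux

/-- Fedosov's trace formula. -/
theorem fedosov_trace_formula
    {X : Type*} [NormedAddCommGroup X] [NormedSpace ℂ X] [CompleteSpace X]
    (T S : X →L[ℂ] X)
    (hker : FiniteDimensional ℂ (LinearMap.ker (T : X →ₗ[ℂ] X)))
    (hclosed : IsClosed (LinearMap.range (T : X →ₗ[ℂ] X) : Set X))
    (hcoker : FiniteDimensional ℂ (X ⧸ LinearMap.range (T : X →ₗ[ℂ] X)))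
    (hTS : IsFiniteRank (T * S - 1)) (hST : IsFiniteRank (S * T - 1)) :
    IsFiniteRank (T * S - S * T) ∧
      trF (T * S - S * T) =
        ((Module.finrank ℂ (LinearMap.ker (T : X →ₗ[ℂ] X)) : ℤ) -
          (Module.finrank ℂ (X ⧸ LinearMap.range (T : X →ₗ[ℂ] X)) : ℤ) : ℤ) := by
  classical
  set 𝕋 : X →ₗ[ℂ] X := (T : X →ₗ[ℂ] X) with h𝕋
  set 𝕊 : X →ₗ[ℂ] X := (S : X →ₗ[ℂ] X) with h𝕊
  obtain ⟨K', hK⟩ := (LinearMap.ker 𝕋).exists_isCompl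
  obtain ⟨R', hR⟩ := (LinearMap.range 𝕋).exists_isCompl
  haveI : FiniteDimensional ℂ R' :=
    (Submodule.quotientEquivOfIsCompl (LinearMap.range 𝕋) R' hR).finiteDimensional
  -- pseudo-inverse
  let e : K' ≃ₗ[ℂ] LinearMap.range 𝕋 :=
    (Submodule.quotientEquivOfIsCompl (LinearMap.ker 𝕋) K' hK).symm ≪≫ₗ 𝕋.quotKerEquivRange
  have he : ∀ k' : K', ((e k' : X)) = 𝕋 (k' : X) := by
    intro k'
    simp only [e, LinearEquiv.trans_apply,
      Submodule.quotientEquivOfIsCompl_symm_apply]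
    exact 𝕋.quotKerEquivRange_apply_mk (k' : X)
  have heT : ∀ y : LinearMap.range 𝕋, 𝕋 ((e.symm y : K') : X) = (y : X) := by
    intro y
    have := he (e.symm y)
    rw [e.apply_symm_apply] at this
    exact this.symm
  let πR : X →ₗ[ℂ] LinearMap.range 𝕋 :=
    (LinearMap.range 𝕋).linearProjOfIsCompl R' hR
  let πR' : X →ₗ[ℂ] R' := R'.linearProjOfIsCompl (LinearMap.range 𝕋) hR.symm
  let πK : X →ₗ[ℂ] LinearMap.ker 𝕋 := (LinearMap.ker 𝕋).linearProjOfIsCompl K' hK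
  let πK' : X →ₗ[ℂ] K' := K'.linearProjOfIsCompl (LinearMap.ker 𝕋) hK.symm
  let s : X →ₗ[ℂ] X := K'.subtype ∘ₗ (e.symm : LinearMap.range 𝕋 →ₗ[ℂ] K') ∘ₗ πR
  have hTs : 𝕋 ∘ₗ s = (LinearMap.range 𝕋).subtype ∘ₗ πR := by
    ext x
    exact heT (πR x)
  have hsT : s ∘ₗ 𝕋 = K'.subtype ∘ₗ πK' := by
    ext x
    have h1 : πR (𝕋 x) = ⟨𝕋 x, mem_range_self 𝕋 x⟩ :=
      Submodule.linearProjOfIsCompl_apply_left hR ⟨𝕋 x, mem_range_self 𝕋 x⟩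
    have h2 : e (πK' x) = ⟨𝕋 x, mem_range_self 𝕋 x⟩ := by
      apply Subtype.ext
      rw [he (πK' x)]
      have hk : ((πK x : X)) + ((πK' x : X)) = x :=
        Submodule.projection_add_projection_eq_self hK x
      have h3 : 𝕋 (((πK x : X)) + ((πK' x : X))) = 𝕋 x := by rw [hk]
      rw [map_add, (πK x).2, zero_add] at h3
      exact h3
    have h4 : e.symm ⟨𝕋 x, mem_range_self 𝕋 x⟩ = πK' x := by
      rw [← h2, e.symm_apply_apply]
    show ((e.symm (πR (𝕋 x)) : K') : X) = ((πK' x : K') : X)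
    rw [h1, h4]
  -- projections
  let p1 : X →ₗ[ℂ] X := R'.subtype ∘ₗ πR'
  let p2 : X →ₗ[ℂ] X := (LinearMap.ker 𝕋).subtype ∘ₗ πK
  have hp1 : LinearMap.id - 𝕋 ∘ₗ s = p1 := by
    ext x
    have hdec : ((πR x : X)) + ((πR' x : X)) = x :=
      Submodule.projection_add_projection_eq_self hR x
    have hTs' : (𝕋 ∘ₗ s) x = (πR x : X) := by rw [hTs]; rfl
    show x - (𝕋 ∘ₗ s) x = ((πR' x : X))
    rw [hTs']
    rw [sub_eq_iff_eq_add']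
    exact hdec.symm
  have hp2 : LinearMap.id - s ∘ₗ 𝕋 = p2 := by
    ext x
    have hdec : ((πK x : X)) + ((πK' x : X)) = x :=
      Submodule.projection_add_projection_eq_self hK x
    have hsT' : (s ∘ₗ 𝕋) x = (πK' x : X) := by rw [hsT]; rfl
    show x - (s ∘ₗ 𝕋) x = ((πK x : X))
    rw [hsT', sub_eq_iff_eq_add]
    exact hdec.symm
  -- finite rank pieces
  let u1 : X →ₗ[ℂ] X := 𝕋 ∘ₗ 𝕊 - LinearMap.id
  let u2 : X →ₗ[ℂ] X := 𝕊 ∘ₗ 𝕋 - LinearMap.id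
  have hcoe1 : ((T * S - 1 : X →L[ℂ] X) : X →ₗ[ℂ] X) = u1 := by ext x; rfl
  have hcoe2 : ((S * T - 1 : X →L[ℂ] X) : X →ₗ[ℂ] X) = u2 := by ext x; rfl
  haveI hu1 : FiniteDimensional ℂ (LinearMap.range u1) := by rw [← hcoe1]; exact hTS
  haveI hu2 : FiniteDimensional ℂ (LinearMap.range u2) := by rw [← hcoe2]; exact hST
  have hrp1 : LinearMap.range p1 ≤ R' := by
    rintro x ⟨y, rfl⟩; exact (πR' y).2
  have hrp2 : LinearMap.range p2 ≤ LinearMap.ker 𝕋 := by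
    rintro x ⟨y, rfl⟩; exact (πK y).2
  haveI : FiniteDimensional ℂ (LinearMap.range p1) :=
    Submodule.finiteDimensional_of_le hrp1
  haveI : FiniteDimensional ℂ (LinearMap.range p2) :=
    Submodule.finiteDimensional_of_le hrp2
  -- the remainder r = 𝕊 - s
  let r : X →ₗ[ℂ] X := 𝕊 - s
  have hTr : 𝕋 ∘ₗ r = u1 + p1 := by
    rw [← hp1]
    ext x
    show 𝕋 (𝕊 x - s x) = (𝕋 (𝕊 x) - x) + (x - 𝕋 (s x))
    rw [map_sub]; abel
  have hrT : r ∘ₗ 𝕋 = u2 + p2 := by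
    rw [← hp2]
    ext x
    show 𝕊 (𝕋 x) - s (𝕋 x) = (𝕊 (𝕋 x) - x) + (x - s (𝕋 x))
    abel
  haveI hfTr : FiniteDimensional ℂ (LinearMap.range (𝕋 ∘ₗ r)) := by
    rw [hTr]
    exact Submodule.finiteDimensional_of_le (FedosovAux.range_add_le u1 p1)
  haveI hfrT : FiniteDimensional ℂ (LinearMap.range (r ∘ₗ 𝕋)) := by
    rw [hrT]
    exact Submodule.finiteDimensional_of_le (FedosovAux.range_add_le u2 p2)
  -- the big finite-dimensional submodule
  let W : Submodule ℂ X :=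
    LinearMap.range (𝕋 ∘ₗ r) ⊔ LinearMap.range (r ∘ₗ 𝕋)
      ⊔ LinearMap.range p1 ⊔ LinearMap.range p2
  haveI hWfin : FiniteDimensional ℂ W := by
    unfold W; infer_instance
  have hWTr : LinearMap.range (𝕋 ∘ₗ r) ≤ W :=
    le_sup_left.trans (le_sup_left.trans le_sup_left)
  have hWrT : LinearMap.range (r ∘ₗ 𝕋) ≤ W :=
    le_sup_right.trans (le_sup_left.trans le_sup_left)
  have hWp1 : LinearMap.range p1 ≤ W := le_sup_right.trans le_sup_left
  have hWp2 : LinearMap.range p2 ≤ W := le_sup_right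
  -- the operator D
  let D : X →ₗ[ℂ] X := 𝕋 ∘ₗ 𝕊 - 𝕊 ∘ₗ 𝕋
  have hcoeD : ((T * S - S * T : X →L[ℂ] X) : X →ₗ[ℂ] X) = D := by ext x; rfl
  have hD : D = (𝕋 ∘ₗ r - r ∘ₗ 𝕋) + (p2 - p1) := by
    rw [hTr, hrT]
    unfold D u1 u2
    abel
  have hDu : D = u1 - u2 := by unfold D u1 u2; abel
  have hsub1 : LinearMap.range (𝕋 ∘ₗ r - r ∘ₗ 𝕋) ≤ W :=
    (range_sub_le _ _).trans (sup_le hWTr hWrT)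
  have hsub2 : LinearMap.range (p2 - p1) ≤ W :=
    (range_sub_le _ _).trans (sup_le hWp2 hWp1)
  have hDW : LinearMap.range D ≤ W := by
    rw [hD]; exact (FedosovAux.range_add_le _ _).trans (sup_le hsub1 hsub2)
  haveI hDfin : FiniteDimensional ℂ (LinearMap.range D) :=
    Submodule.finiteDimensional_of_le hDW
  constructor
  · show FiniteDimensional ℂ (LinearMap.range ((T * S - S * T : X →L[ℂ] X) : X →ₗ[ℂ] X))
    rw [hcoeD]; exact hDfin
  · -- trace computation
    haveI : FiniteDimensional ℂ
        (LinearMap.range ((T * S - S * T : X →L[ℂ] X) : X →ₗ[ℂ] X)) := by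
      rw [hcoeD]; exact hDfin
    have hcoeW : LinearMap.range ((T * S - S * T : X →L[ℂ] X) : X →ₗ[ℂ] X) ≤ W := by
      rw [hcoeD]; exact hDW
    have step0 : trF (T * S - S * T) = trAux D W hDW := by
      calc trF (T * S - S * T)
          = trAux ((T * S - S * T : X →L[ℂ] X) : X →ₗ[ℂ] X)
              (LinearMap.range ((T * S - S * T : X →L[ℂ] X) : X →ₗ[ℂ] X)) le_rfl := rfl
        _ = trAux ((T * S - S * T : X →L[ℂ] X) : X →ₗ[ℂ] X) W hcoeW :=
            trAux_indep _ _ _ _ _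
        _ = trAux D W hDW := trAux_congr hcoeD _ _
    -- commutator part has zero trace
    have hcomm : trAux (𝕋 ∘ₗ r) W hWTr = trAux (r ∘ₗ 𝕋) W hWrT := by
      have hA : ∀ x ∈ LinearMap.range (r ∘ₗ 𝕋), 𝕋 x ∈ LinearMap.range (𝕋 ∘ₗ r) := by
        rintro x ⟨y, rfl⟩
        exact ⟨𝕋 y, rfl⟩
      have hB : ∀ x ∈ LinearMap.range (𝕋 ∘ₗ r), r x ∈ LinearMap.range (r ∘ₗ 𝕋) := by
        rintro x ⟨y, rfl⟩
        exact ⟨r y, rfl⟩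
      calc trAux (𝕋 ∘ₗ r) W hWTr
          = trAux (𝕋 ∘ₗ r) (LinearMap.range (𝕋 ∘ₗ r)) le_rfl := trAux_indep _ _ _ _ _
        _ = trAux (r ∘ₗ 𝕋) (LinearMap.range (r ∘ₗ 𝕋)) le_rfl :=
            trAux_comp 𝕋 r _ _ hA hB le_rfl le_rfl
        _ = trAux (r ∘ₗ 𝕋) W hWrT := trAux_indep _ _ _ _ _
    -- projection traces
    have hπK : ∀ w : LinearMap.ker 𝕋, πK (w : X) = w := fun w =>
      Submodule.linearProjOfIsCompl_apply_left hK w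
    have hπR' : ∀ w : R', πR' (w : X) = w := fun w =>
      Submodule.linearProjOfIsCompl_apply_left hR.symm w
    have hp2K : LinearMap.range p2 ≤ LinearMap.ker 𝕋 := hrp2
    have hp1R : LinearMap.range p1 ≤ R' := hrp1
    have htr2 : trAux p2 W hWp2 = (Module.finrank ℂ (LinearMap.ker 𝕋) : ℂ) := by
      calc trAux p2 W hWp2 = trAux p2 (LinearMap.ker 𝕋) hp2K := trAux_indep _ _ _ _ _
        _ = (Module.finrank ℂ (LinearMap.ker 𝕋) : ℂ) := trAux_proj _ πK hπK _
    have htr1 : trAux p1 W hWp1 = (Module.finrank ℂ R' : ℂ) := by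
      calc trAux p1 W hWp1 = trAux p1 R' hp1R := trAux_indep _ _ _ _ _
        _ = (Module.finrank ℂ R' : ℂ) := trAux_proj _ πR' hπR' _
    have hfinR' : Module.finrank ℂ (X ⧸ LinearMap.range 𝕋) = Module.finrank ℂ R' :=
      (Submodule.quotientEquivOfIsCompl (LinearMap.range 𝕋) R' hR).finrank_eq
    have step1 : trAux D W hDW
        = (trAux (𝕋 ∘ₗ r) W hWTr - trAux (r ∘ₗ 𝕋) W hWrT)
          + (trAux p2 W hWp2 - trAux p1 W hWp1) := by
      rw [trAux_congr hD hDW ((FedosovAux.range_add_le _ _).trans (sup_le hsub1 hsub2)),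
        trAux_add _ _ _ hsub1 hsub2,
        trAux_sub _ _ _ hWTr hWrT, trAux_sub _ _ _ hWp2 hWp1]
    rw [step0, step1, hcomm, sub_self, zero_add, htr1, htr2, hfinR']
    push_cast
    ring
end

section
/- Let A be a Banach algebra, J an ideal of A, and suppose that an element is invertible modulo J if and only if it is invertible modulo the closure of J. If a ∈ A is B-Fredholm modulo J (π(a) Drazin invertible in A/J), then there exists ε > 0 such that for all λ ∈ ℂ with 0 < |λ| < ε, the element a - λ·1 is invertible modulo J (i.e., Fredholm modulo J). -/
private lemma telescope_aux {R : Type*} [Ring R] (B z z' : R)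
    (hzz' : z * z' = 1) (hBz' : Commute B z') (k : ℕ) :
    (B - z) * (∑ i ∈ Finset.range k, z' ^ (i + 1) * B ^ i) = z' ^ k * B ^ k - 1 := by
  induction k with
  | zero => simp
  | succ k ih =>
    have h1 : B * (z' ^ (k + 1) * B ^ k) = z' ^ (k + 1) * B ^ (k + 1) := by
      rw [← mul_assoc, (hBz'.pow_right (k + 1)).eq, mul_assoc, ← pow_succ']
    have h2 : z * (z' ^ (k + 1) * B ^ k) = z' ^ k * B ^ k := by
      rw [← mul_assoc, pow_succ' z', ← mul_assoc, hzz', one_mul]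
    rw [Finset.sum_range_succ, mul_add, ih, sub_mul, h1, h2]
    abel

/-- In a Banach algebra in which invertibility modulo the ideal `J` coincides with
invertibility modulo the closure of `J`, a B-Fredholm element `a` modulo `J` is such
that `a - λ·1` is Fredholm (invertible) modulo `J` for all small nonzero `λ`. -/
theorem bFredholm_perturbation
    {A : Type*} [NormedRing A] [NormedAlgebra ℂ A] [CompleteSpace A]
    (J : TwoSidedIdeal A)
    (hJ : ∀ x : A, (∃ b, x * b - 1 ∈ J ∧ b * x - 1 ∈ J) ↔
      (∃ b, x * b - 1 ∈ closure (J : Set A) ∧ b * x - 1 ∈ closure (J : Set A)))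
    (π : A →+* J.ringCon.Quotient) (hπ : π = RingCon.mk' J.ringCon)
    (a : A) (hBF : ∃ a₀ : A, IsDrazinInverse (π a) (π a₀)) :
    ∃ ε > 0, ∀ lam : ℂ, lam ≠ 0 → ‖lam‖ < ε →
      ∃ b, (a - lam • 1) * b - 1 ∈ J ∧ b * (a - lam • 1) - 1 ∈ J := by
  obtain ⟨a₀, hBC, hCBC, k, hk⟩ := hBF
  refine ⟨(‖a₀‖ + 1)⁻¹, by positivity, fun lam hlam hlt => ?_⟩
  -- key membership criterion
  have hmem : ∀ x : A, π x = 1 → x - 1 ∈ J := by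
    intro x hx
    rw [← TwoSidedIdeal.rel_iff, ← RingCon.eq]
    subst hπ
    exact hx
  -- the geometric-series unit
  have hnorm : ‖lam • a₀‖ < 1 := by
    rw [norm_smul]
    calc ‖lam‖ * ‖a₀‖ < (‖a₀‖ + 1)⁻¹ * (‖a₀‖ + 1) := by
          apply mul_lt_mul' (le_of_lt hlt) (by linarith [norm_nonneg a₀]) (norm_nonneg a₀)
          positivity
      _ = 1 := by rw [inv_mul_cancel₀]; positivity
  set u : Aˣ := Units.oneSub (lam • a₀) hnorm with hu
  set t : A := ↑u⁻¹ with htdef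
  -- notation in the quotient
  set B := π a with hB
  set C := π a₀ with hC
  set z : J.ringCon.Quotient := π (lam • 1) with hz
  set z' : J.ringCon.Quotient := π (lam⁻¹ • 1) with hz'
  set T : J.ringCon.Quotient := π t with hT
  set P := B * C with hP
  have hzz' : z * z' = 1 := by
    have h1 : (lam • (1 : A)) * (lam⁻¹ • 1) = 1 := by
      rw [smul_mul_assoc, one_mul, smul_smul, mul_inv_cancel₀ hlam, one_smul]
    rw [hz, hz', ← map_mul, h1, map_one]
  have hz'z : z' * z = 1 := by
    have h1 : (lam⁻¹ • (1 : A)) * (lam • 1) = 1 := by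
      rw [smul_mul_assoc, one_mul, smul_smul, inv_mul_cancel₀ hlam, one_smul]
    rw [hz, hz', ← map_mul, h1, map_one]
  -- z and z' are central on the quotient (on the range of π)
  have hcen : ∀ x : A, Commute (π x) z := fun x => by
    have h1 : x * (lam • 1) = (lam • 1) * x := by
      rw [mul_smul_comm, smul_mul_assoc, mul_one, one_mul]
    have : π x * π (lam • 1) = π (lam • 1) * π x := by rw [← map_mul, ← map_mul, h1]
    exact this
  have hcen' : ∀ x : A, Commute (π x) z' := fun x => by
    have h1 : x * (lam⁻¹ • 1) = (lam⁻¹ • 1) * x := by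
      rw [mul_smul_comm, smul_mul_assoc, mul_one, one_mul]
    have : π x * π (lam⁻¹ • 1) = π (lam⁻¹ • 1) * π x := by rw [← map_mul, ← map_mul, h1]
    exact this
  -- image of the unit `1 - lam • a₀`
  have hsm : lam • a₀ = (lam • (1 : A)) * a₀ := by rw [smul_mul_assoc, one_mul]
  have hπu : π (1 - lam • a₀) = 1 - z * C := by
    rw [map_sub, map_one, hsm, map_mul, hz, hC]
  have h1T : (1 - z * C) * T = 1 := by
    have h : (1 - lam • a₀) * t = 1 := by
      rw [htdef, hu]; exact_mod_cast u.mul_inv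
    rw [← hπu, hT, ← map_mul, h, map_one]
  have hT1 : T * (1 - z * C) = 1 := by
    have h : t * (1 - lam • a₀) = 1 := by
      rw [htdef, hu]; exact_mod_cast u.inv_mul
    rw [← hπu, hT, ← map_mul, h, map_one]
  -- basic commutations
  have hBCc : Commute B C := hBC
  have hBzC : Commute B (1 - z * C) :=
    (Commute.one_right B).sub_right ((hcen a).mul_right hBCc)
  have hCzC : Commute C (1 - z * C) :=
    (Commute.one_right C).sub_right ((hcen a₀).mul_right (Commute.refl C))
  have comm_T : ∀ y : J.ringCon.Quotient, Commute y (1 - z * C) → Commute y T := by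
    intro y hy
    have : y * T = T * y :=
      calc y * T = T * ((1 - z * C) * y) * T := by rw [← mul_assoc, hT1, one_mul]
        _ = T * (y * (1 - z * C)) * T := by rw [← hy.eq]
        _ = T * y * ((1 - z * C) * T) := by rw [mul_assoc, mul_assoc, mul_assoc]
        _ = T * y := by rw [h1T, mul_one]
    exact this
  have hBT : Commute B T := comm_T B hBzC
  have hCT : Commute C T := comm_T C hCzC
  have hzCC : Commute z (1 - z * C) :=
    (Commute.one_right z).sub_right ((Commute.refl z).mul_right (hcen a₀).symm)
  have hzT : Commute z T := comm_T z hzCC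
  -- commutations with P
  have hzP : Commute z (1 - P) :=
    (Commute.one_right z).sub_right ((hcen a).symm.mul_right (hcen a₀).symm)
  have hB1P : Commute B (1 - P) :=
    (Commute.one_right B).sub_right ((Commute.refl B).mul_right hBCc)
  -- algebraic identities from the Drazin inverse
  have hPC : P * C = C := by rw [hBC]; exact hCBC
  have hBkP : B ^ k * (1 - P) = 0 := by
    rw [mul_sub, mul_one, hP, ← mul_assoc, ← pow_succ, hk, sub_self]
  -- the candidate inverse
  set v : J.ringCon.Quotient := ∑ i ∈ Finset.range k, z' ^ (i + 1) * B ^ i with hv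
  set U : J.ringCon.Quotient := C * T - v * (1 - P) with hU
  -- main computation : (B - z) * U = 1
  have key : (B - z) * U = 1 := by
    have h0 : (1 - P) * C = 0 := by rw [sub_mul, one_mul, hPC, sub_self]
    have h2 : (1 - P) * (1 - z * C) = 1 - P := by
      rw [mul_sub, mul_one, ← mul_assoc, ← hzP.eq, mul_assoc, h0, mul_zero, sub_zero]
    have h3 : (1 - P) * T = 1 - P := by
      calc (1 - P) * T = ((1 - P) * (1 - z * C)) * T := by rw [h2]
        _ = (1 - P) * ((1 - z * C) * T) := by rw [mul_assoc]
        _ = 1 - P := by rw [h1T, mul_one]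
    have part1 : (B - z) * (C * T) = P := by
      have e1 : (B - z) * (C * T) = (P - z * C) * T := by
        rw [hP, sub_mul, sub_mul, mul_assoc, mul_assoc]
      have e2 : P - z * C = (1 - z * C) - (1 - P) := by abel
      rw [e1, e2, sub_mul, h1T, h3]
      abel
    have part2 : (B - z) * (v * (1 - P)) = -(1 - P) := by
      rw [← mul_assoc, hv, telescope_aux B z z' hzz' (hcen' a), sub_mul, one_mul,
        mul_assoc, hBkP, mul_zero, zero_sub]
    rw [hU, mul_sub, part1, part2]
    abel
  -- commutation of U with B - z
  have hcz : Commute z z' := hzz'.trans hz'z.symm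
  have hvB : Commute B v := Commute.sum_right _ _ _ fun i _ =>
    ((hcen' a).pow_right (i + 1)).mul_right ((Commute.refl B).pow_right i)
  have hvz : Commute z v := Commute.sum_right _ _ _ fun i _ =>
    (hcz.pow_right (i + 1)).mul_right ((hcen a).symm.pow_right i)
  have hBU : Commute B U := (hBCc.mul_right hBT).sub_right (hvB.mul_right hB1P)
  have hzU : Commute z U := ((hcen a₀).symm.mul_right hzT).sub_right (hvz.mul_right hzP)
  have hUB : Commute (B - z) U := hBU.sub_left hzU
  have key' : U * (B - z) = 1 := by rw [← hUB.eq, key]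
  -- lift U to A
  set w : A := a₀ * t - (∑ i ∈ Finset.range k, (lam⁻¹ • (1 : A)) ^ (i + 1) * a ^ i) *
    (1 - a * a₀) with hw
  have hπw : π w = U := by
    rw [hw, map_sub, map_mul, map_mul, map_sum, map_sub, map_mul, map_one]
    congr 1
    congr 1
    refine Finset.sum_congr rfl fun i _ => ?_
    rw [map_mul, map_pow, map_pow]
  have hπa : π (a - lam • 1) = B - z := by rw [map_sub]
  refine ⟨w, hmem _ ?_, hmem _ ?_⟩
  · rw [map_mul, hπa, hπw, key]
  · rw [map_mul, hπa, hπw, key']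
end

section
/- In a unital Banach algebra B, if b is Drazin invertible (there exist c and k with bc = cb, cbc = c, b^(k+1)c = b^k), then 0 is not an accumulation point of the spectrum of b; i.e., there is ε > 0 such that b - λ·1 is invertible for all 0 < |λ| < ε. -/
/-- In a unital Banach algebra, if `b` is Drazin invertible then `0` is not an
accumulation point of the spectrum of `b`: `b - λ·1` is invertible for all
sufficiently small nonzero `λ`. -/
theorem drazin_invertible_isolated_zero
    {B : Type*} [NormedRing B] [NormedAlgebra ℂ B] [CompleteSpace B]
    (b : B) (h : ∃ c : B, IsDrazinInverse b c) :
    ∃ ε > 0, ∀ lam : ℂ, lam ≠ 0 → ‖lam‖ < ε → IsUnit (b - lam • 1) := by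
  obtain ⟨c, hbc, hcbc, k, hk⟩ := h
  refine ⟨(‖c‖ + 1)⁻¹, by positivity, ?_⟩
  intro lam hlam hnorm
  have hc0 : (0:ℝ) ≤ ‖c‖ := norm_nonneg c
  have hpos : (0:ℝ) < ‖c‖ + 1 := by positivity
  have key : ‖lam‖ * (‖c‖ + 1) < 1 := by
    have := mul_lt_mul_of_pos_right hnorm hpos
    rwa [inv_mul_cancel₀ (ne_of_gt hpos)] at this
  have hsmall : ‖lam • c‖ < 1 := by
    rw [norm_smul]
    nlinarith [norm_nonneg lam]
  set q : B := 1 - b * c with hq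
  have hbcc : b * c * c = c := by rw [hbc]; exact hcbc
  have hqc : q * c = 0 := by rw [hq, sub_mul, one_mul, hbcc, sub_self]
  have hcq : c * q = 0 := by
    rw [hq, mul_sub, mul_one, ← mul_assoc, hcbc, sub_self]
  have hbkq : b ^ k * q = 0 := by
    rw [hq, mul_sub, mul_one, ← mul_assoc, ← pow_succ, hk, sub_self]
  set u : Bˣ := Units.oneSub (lam • c) hsmall with hu
  have huval : (u : B) = 1 - lam • c := rfl
  set r : B := ((u⁻¹ : Bˣ) : B) with hr
  have hur : (u : B) * r = 1 := u.mul_inv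
  have hru : r * (u : B) = 1 := u.inv_mul
  -- commutation facts
  have hCbc : Commute b c := hbc
  have hCbu : Commute b (u : B) := by
    rw [huval]; exact (Commute.one_right b).sub_right (hCbc.smul_right lam)
  have hCbr : Commute b r := hCbu.units_inv_right
  have hCcu : Commute c (u : B) := by
    rw [huval]; exact (Commute.one_right c).sub_right ((Commute.refl c).smul_right lam)
  have hCcr : Commute c r := hCcu.units_inv_right
  have hCbq : Commute b q := by
    rw [hq]; exact (Commute.one_right b).sub_right ((Commute.refl b).mul_right hCbc)
  have hqu : q * (u : B) = q := by
    rw [huval, mul_sub, mul_one, mul_smul_comm, hqc, smul_zero, sub_zero]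
  have hqr : q * r = q := by
    calc q * r = q * (u : B) * r := by rw [hqu]
    _ = q * ((u : B) * r) := by rw [mul_assoc]
    _ = q := by rw [hur, mul_one]
  -- the candidate inverse
  set f : ℕ → B := fun j => (lam⁻¹) ^ j • (b ^ j * q) with hf
  set z : B := c * r - ∑ j ∈ Finset.range k, (lam⁻¹) ^ (j + 1) • (b ^ j * q) with hz
  -- part A
  have hA : (b - lam • 1) * (c * r) = 1 - q := by
    have h1 : (b - lam • 1) * c = (1 - lam • c) - q := by
      rw [sub_mul, smul_mul_assoc, one_mul, hq]; abel
    calc (b - lam • 1) * (c * r) = ((b - lam • 1) * c) * r := by rw [mul_assoc]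
    _ = ((1 - lam • c) - q) * r := by rw [h1]
    _ = (u : B) * r - q * r := by rw [sub_mul, huval]
    _ = 1 - q := by rw [hur, hqr]
  -- part B : termwise telescoping
  have hterm : ∀ j, (b - lam • 1) * ((lam⁻¹) ^ (j + 1) • (b ^ j * q)) = f (j + 1) - f j := by
    intro j
    rw [sub_mul, mul_smul_comm, ← mul_assoc, ← pow_succ', hf]
    simp only
    rw [smul_mul_assoc, one_mul, smul_smul, pow_succ lam⁻¹ j, mul_comm ((lam⁻¹)^j) lam⁻¹,
      ← mul_assoc, mul_inv_cancel₀ hlam, one_mul]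
  have hB : (b - lam • 1) * (∑ j ∈ Finset.range k, (lam⁻¹) ^ (j + 1) • (b ^ j * q)) = -q := by
    rw [Finset.mul_sum]
    simp only [hterm]
    rw [Finset.sum_range_sub f k]
    have hfk : f k = 0 := by rw [hf]; simp only; rw [hbkq, smul_zero]
    have hf0 : f 0 = q := by simp [hf]
    rw [hfk, hf0, zero_sub]
  have hmul : (b - lam • 1) * z = 1 := by
    rw [hz, mul_sub, hA, hB]; abel
  -- z commutes with b - lam • 1
  have hCz : Commute (b - lam • 1) z := by
    have h1 : Commute b z := by
      rw [hz]
      refine (hCbc.mul_right hCbr).sub_right ?_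
      refine Commute.sum_right _ _ _ (fun j _ => ?_)
      exact (((Commute.refl b).pow_right j).mul_right hCbq).smul_right _
    have h2 : Commute (lam • 1) z := (Commute.one_left z).smul_left lam
    exact h1.sub_left h2
  exact isUnit_iff_exists.mpr ⟨z, hmul, by rw [← hCz.eq]; exact hmul⟩
end

section
/- Let A be a ring, J an ideal, and a₁, a₂, u₁, u₂ ∈ A pairwise commuting elements with u₁a₁ + u₂a₂ = 1. If π(a₁) and π(a₂) are Drazin invertible in A/J, then π(a₁a₂) is Drazin invertible in A/J; i.e., the product of two B-Fredholm elements satisfying a commuting Bézout identity is B-Fredholm. -/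
/-- Drazin inverses lie in the double commutant: if `c` is a Drazin inverse of `b`
and `x` commutes with `b`, then `x` commutes with `c`. -/
lemma drazin_double_commute {R : Type*} [Ring R] {b c x : R}
    (hbc : b * c = c * b) (hcbc : c * b * c = c) {k : ℕ} (hk : b ^ (k + 1) * c = b ^ k)
    (hx : x * b = b * x) : x * c = c * x := by
  have Cbc : Commute b c := hbc
  have Cxb : Commute x b := hx
  have he : (b * c) * (b * c) = b * c := by
    rw [mul_assoc, ← mul_assoc c b c, hcbc]
  have hbme : b ^ (k + 1) * (b * c) = b ^ (k + 1) := by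
    rw [← mul_assoc, ← pow_succ, pow_succ' b (k + 1), mul_assoc, hk, ← pow_succ']
  have Ceb : Commute (b * c) b := ((Commute.refl b).mul_right Cbc).symm
  have hbme' : (b * c) * b ^ (k + 1) = b ^ (k + 1) := by
    rw [(Ceb.pow_right (k + 1)).eq, hbme]
  have hepow : ∀ n : ℕ, (b * c) ^ (n + 1) = b * c := by
    intro n; induction n with
    | zero => rw [pow_one]
    | succ n ih => rw [pow_succ, ih, he]
  have hecm : b ^ (k + 1) * c ^ (k + 1) = b * c := by
    rw [← Cbc.mul_pow, hepow k]
  have hbmx : b ^ (k + 1) * x = x * b ^ (k + 1) := (Cxb.symm.pow_left (k + 1)).eq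
  have hcmbm : c ^ (k + 1) * b ^ (k + 1) = b ^ (k + 1) * c ^ (k + 1) :=
    (Cbc.pow_pow (k + 1) (k + 1)).eq.symm
  have h1 : (b * c) * x = c ^ (k + 1) * x * b ^ (k + 1) := by
    rw [← hecm, ← hcmbm, mul_assoc, hbmx, ← mul_assoc]
  have hexe : (b * c) * x * (b * c) = (b * c) * x := by
    rw [h1, mul_assoc (c ^ (k + 1) * x), hbme]
  have h2 : x * (b * c) = b ^ (k + 1) * x * c ^ (k + 1) := by
    rw [← hecm, ← mul_assoc, ← hbmx]
  have hexe2 : (b * c) * (x * (b * c)) = x * (b * c) := by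
    rw [h2, ← mul_assoc, ← mul_assoc, hbme']
  have Cxe : x * (b * c) = (b * c) * x := by
    rw [← hexe2, ← mul_assoc, hexe]
  have hce : c * (b * c) = c := by rw [← mul_assoc, hcbc]
  have hec : (b * c) * c = c := by rw [hbc]; exact hcbc
  have Cxe' : Commute x (b * c) := Cxe
  have Cxebe : (x * (b * c)) * (b * (b * c)) = (b * (b * c)) * (x * (b * c)) :=
    (Commute.mul_left (Cxb.mul_right Cxe') (Ceb.mul_right (Commute.refl (b * c)))).eq
  have hbec : (b * (b * c)) * c = b * c := by rw [mul_assoc, hec]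
  have hcbe : c * (b * (b * c)) = b * c := by rw [← mul_assoc, ← hbc]; exact he
  have final : c * x = x * c := by
    calc c * x = (c * (b * c)) * x := by rw [hce]
      _ = c * (x * (b * c)) := by rw [mul_assoc, ← Cxe]
      _ = c * ((x * (b * c)) * ((b * (b * c)) * c)) := by
            rw [hbec, mul_assoc x (b * c) (b * c), he]
      _ = c * (((x * (b * c)) * (b * (b * c))) * c) := by rw [← mul_assoc (x * (b * c))]
      _ = c * (((b * (b * c))) * (x * (b * c)) * c) := by rw [Cxebe]
      _ = ((c * (b * (b * c))) * (x * (b * c))) * c := by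
            rw [← mul_assoc c, ← mul_assoc c]
      _ = ((b * c) * (x * (b * c))) * c := by rw [hcbe]
      _ = (x * (b * c)) * c := by
            rw [← mul_assoc (b * c) x, ← Cxe, mul_assoc x (b * c) (b * c), he]
      _ = x * c := by rw [mul_assoc, hec]
  exact final.symm

/-- The Drazin index can be raised: `b^(n+1) * c = b^n` for any `n ≥ k`. -/
lemma drazin_pow_le {R : Type*} [Ring R] {b c : R} {k : ℕ} (hk : b ^ (k + 1) * c = b ^ k) :
    ∀ j : ℕ, b ^ (k + j + 1) * c = b ^ (k + j) := by
  intro j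
  induction j with
  | zero => exact hk
  | succ j ih =>
      show b ^ ((k + j + 1) + 1) * c = b ^ ((k + j) + 1)
      rw [pow_succ' b (k + j + 1), mul_assoc, ih, ← pow_succ']

/-- The product of two B-Fredholm elements satisfying a commuting Bézout identity
is B-Fredholm. -/
theorem bFredholm_product_bezout
    {A : Type*} [Ring A] (J : TwoSidedIdeal A)
    (π : A →+* J.ringCon.Quotient) (hπ : π = RingCon.mk' J.ringCon)
    (a₁ a₂ u₁ u₂ : A)
    (h12 : a₁ * a₂ = a₂ * a₁) (h1u1 : a₁ * u₁ = u₁ * a₁) (h1u2 : a₁ * u₂ = u₂ * a₁)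
    (h2u1 : a₂ * u₁ = u₁ * a₂) (h2u2 : a₂ * u₂ = u₂ * a₂) (hu12 : u₁ * u₂ = u₂ * u₁)
    (hbezout : u₁ * a₁ + u₂ * a₂ = 1)
    (hBF₁ : ∃ b₁ : A, IsDrazinInverse (π a₁) (π b₁))
    (hBF₂ : ∃ b₂ : A, IsDrazinInverse (π a₂) (π b₂)) :
    ∃ c, IsDrazinInverse (π (a₁ * a₂)) c := by
  obtain ⟨b₁, hxc1, hcxc1, k₁, hk1⟩ := hBF₁
  obtain ⟨b₂, hyc2, hcyc2, k₂, hk2⟩ := hBF₂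
  set x := π a₁
  set y := π a₂
  set c₁ := π b₁
  set c₂ := π b₂
  have hxy : x * y = y * x := by rw [← map_mul, ← map_mul, h12]
  -- the Drazin inverses double-commute with everything in sight
  have hyc1 : y * c₁ = c₁ * y := drazin_double_commute hxc1 hcxc1 hk1 hxy.symm
  have hxc2 : x * c₂ = c₂ * x := drazin_double_commute hyc2 hcyc2 hk2 hxy
  have hc1c2 : c₁ * c₂ = c₂ * c₁ := drazin_double_commute hyc2 hcyc2 hk2 hyc1.symm
  have Cxy : Commute x y := hxy
  have Cxc1 : Commute x c₁ := hxc1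
  have Cxc2 : Commute x c₂ := hxc2
  have Cyc1 : Commute y c₁ := hyc1
  have Cyc2 : Commute y c₂ := hyc2
  have Cc1c2 : Commute c₁ c₂ := hc1c2
  refine ⟨c₁ * c₂, ?_, ?_, ?_⟩
  · rw [map_mul]
    exact (Commute.mul_left (Cxc1.mul_right Cxc2) (Cyc1.mul_right Cyc2)).eq
  · rw [map_mul]
    calc c₁ * c₂ * (x * y) * (c₁ * c₂)
        = c₁ * x * (c₂ * y) * (c₁ * c₂) := by rw [Cxc2.symm.mul_mul_mul_comm]
      _ = c₁ * x * c₁ * (c₂ * y * c₂) :=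
          (Commute.mul_left Cc1c2.symm Cyc1).mul_mul_mul_comm _ _
      _ = c₁ * c₂ := by rw [hcxc1, hcyc2]
  · refine ⟨k₁ + k₂, ?_⟩
    have hx' : x ^ (k₁ + k₂ + 1) * c₁ = x ^ (k₁ + k₂) := drazin_pow_le hk1 k₂
    have hy' : y ^ (k₁ + k₂ + 1) * c₂ = y ^ (k₁ + k₂) := by
      have := drazin_pow_le hk2 k₁
      rwa [Nat.add_comm k₂ k₁] at this
    rw [map_mul, Cxy.mul_pow, Cxy.mul_pow,
      (Cyc1.pow_left (k₁ + k₂ + 1)).mul_mul_mul_comm, hx', hy']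
end

section
/- Let A be a ring with ideal J carrying a trace τ (additive, ℂ-homogeneous, τ(xb) = τ(bx) for x ∈ J, b ∈ A). If a is B-Fredholm modulo J and j ∈ J, then a + j is B-Fredholm modulo J and the indices agree: i(a + j) = i(a), where i(x) = τ(x x₀ - x₀ x) for any Drazin inverse x₀ of x modulo J. -/
/-- Perturbing a B-Fredholm element by an element of the ideal `J` preserves
B-Fredholmness and the trace index: `i(a + j) = i(a)`. -/
theorem bFredholm_index_perturbation_ideal
    {A : Type*} [Ring A] [Algebra ℂ A] (J : TwoSidedIdeal A)
    (π : A →+* J.ringCon.Quotient) (hπ : π = RingCon.mk' J.ringCon)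
    (τ : A → ℂ)
    (hadd : ∀ x ∈ J, ∀ y ∈ J, τ (x + y) = τ x + τ y)
    (hsmul : ∀ (α : ℂ), ∀ x ∈ J, τ (α • x) = α * τ x)
    (hcomm : ∀ x ∈ J, ∀ b : A, τ (x * b) = τ (b * x))
    (a j : A) (hj : j ∈ J)
    (hBF : ∃ a₀ : A, IsDrazinInverse (π a) (π a₀)) :
    (∃ b : A, IsDrazinInverse (π (a + j)) (π b)) ∧
      ∀ a₀ b : A, IsDrazinInverse (π a) (π a₀) → IsDrazinInverse (π (a + j)) (π b) →
        τ ((a + j) * b - b * (a + j)) = τ (a * a₀ - a₀ * a) := by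
  -- π kills J, so π (a + j) = π a
  have hmem : ∀ x y : A, π x = π y ↔ x - y ∈ J := by
    intro x y
    rw [hπ]
    exact (RingCon.eq _).trans (J.rel_iff x y)
  have hπj : π (a + j) = π a := by
    rw [hmem]
    simpa using hj
  -- τ is ℂ-linear enough: τ (-x) = - τ x and τ (x - y) = τ x - τ y on J
  have hneg : ∀ x ∈ J, τ (-x) = -τ x := by
    intro x hx
    have := hsmul (-1) x hx
    simpa using this
  have hsub : ∀ x ∈ J, ∀ y ∈ J, τ (x - y) = τ x - τ y := by
    intro x hx y hy
    rw [sub_eq_add_neg, hadd x hx _ (J.neg_mem hy), hneg y hy, sub_eq_add_neg]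
  -- commutator traces vanish
  have hcommzero : ∀ x ∈ J, ∀ b : A, τ (x * b - b * x) = 0 := by
    intro x hx b
    rw [hsub _ (J.mul_mem_right _ _ hx) _ (J.mul_mem_left _ _ hx), hcomm x hx b, sub_self]
  refine ⟨?_, ?_⟩
  · obtain ⟨a₀, ha₀⟩ := hBF
    exact ⟨a₀, by rwa [hπj]⟩
  · intro a₀ b ha₀ hb
    rw [hπj] at hb
    -- uniqueness: π a₀ = π b, so x := b - a₀ ∈ J
    have hx : b - a₀ ∈ J := by
      rw [← hmem]
      exact (drazin_unique hb ha₀)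
    set x := b - a₀ with hxdef
    -- a * a₀ - a₀ * a ∈ J since π a and π a₀ commute
    have hcJ : a * a₀ - a₀ * a ∈ J := by
      rw [← hmem, map_mul, map_mul]
      exact ha₀.1
    have hdecomp : (a + j) * b - b * (a + j)
        = (a * a₀ - a₀ * a) + ((a * x - x * a) + (j * b - b * j)) := by
      rw [hxdef]
      noncomm_ring
    have hu1 : a * x - x * a ∈ J :=
      J.sub_mem (J.mul_mem_left _ _ hx) (J.mul_mem_right _ _ hx)
    have hu2 : j * b - b * j ∈ J :=
      J.sub_mem (J.mul_mem_right _ _ hj) (J.mul_mem_left _ _ hj)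
    rw [hdecomp, hadd _ hcJ _ (J.add_mem hu1 hu2), hadd _ hu1 _ hu2]
    have h1 : τ (a * x - x * a) = 0 := by
      rw [hsub _ (J.mul_mem_left _ _ hx) _ (J.mul_mem_right _ _ hx), hcomm x hx a, sub_self]
    have h2 : τ (j * b - b * j) = 0 := hcommzero j hj b
    rw [h1, h2]
    ring
end

section
/- Let X be a Banach space, X = M ⊕ N a direct sum of closed invariant subspaces of T ∈ L(X), with T|_N nilpotent of order p and T|_M Fredholm. Let T₀ be an inverse of T|_M modulo finite-rank operators on M and S = T₀ ⊕ 0. Then T^p S^p - S^p T^p is a finite-rank operator and tr(T^p S^p - S^p T^p) = p · ind(T|_M). -/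
open LinearMap Submodule Module

section TraceLemmas

variable {V : Type*} [AddCommGroup V] [Module ℂ V]

/-- Algebraic trace of a (finite-rank) linear endomorphism, via restriction to its range. -/
noncomputable def trR (f : V →ₗ[ℂ] V) : ℂ :=
  LinearMap.trace ℂ (LinearMap.range f)
    (f.restrict (fun x _ => LinearMap.mem_range_self _ x))

lemma trR_eq (f : V →ₗ[ℂ] V) (W : Submodule ℂ V) [FiniteDimensional ℂ W]
    (hW : LinearMap.range f ≤ W) :
    trR f = LinearMap.trace ℂ W (f.restrict fun x _ => hW (LinearMap.mem_range_self f x)) := by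
  haveI : FiniteDimensional ℂ (LinearMap.range f) := Submodule.finiteDimensional_of_le hW
  let j : LinearMap.range f →ₗ[ℂ] W := Submodule.inclusion hW
  let q : W →ₗ[ℂ] LinearMap.range f :=
    (f.domRestrict W).codRestrict (LinearMap.range f) (fun x => ⟨x, rfl⟩)
  have h1 : f.restrict (fun x _ => hW (LinearMap.mem_range_self f x)) = j ∘ₗ q := by
    ext x; rfl
  have h2 : f.restrict (fun x _ => LinearMap.mem_range_self f x) = q ∘ₗ j := by
    ext x; rfl
  rw [trR, h1, h2, LinearMap.trace_comp_comm']

end TraceLemmas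

section More
variable {V : Type*} [AddCommGroup V] [Module ℂ V]

lemma range_sub_le (f g : V →ₗ[ℂ] V) :
    LinearMap.range (f - g) ≤ LinearMap.range f ⊔ LinearMap.range g := by
  rintro x ⟨y, rfl⟩
  exact Submodule.sub_mem _ (Submodule.mem_sup_left (LinearMap.mem_range_self f y))
    (Submodule.mem_sup_right (LinearMap.mem_range_self g y))

lemma range_add_le (f g : V →ₗ[ℂ] V) :
    LinearMap.range (f + g) ≤ LinearMap.range f ⊔ LinearMap.range g := by
  rintro x ⟨y, rfl⟩
  exact Submodule.add_mem _ (Submodule.mem_sup_left (LinearMap.mem_range_self f y))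
    (Submodule.mem_sup_right (LinearMap.mem_range_self g y))

lemma range_mul_right_le (g f : V →ₗ[ℂ] V) :
    LinearMap.range (g * f) ≤ LinearMap.range g := by
  rintro x ⟨y, rfl⟩
  exact LinearMap.mem_range_self g (f y)

lemma fr_sub {f g : V →ₗ[ℂ] V} (hf : FiniteDimensional ℂ (LinearMap.range f))
    (hg : FiniteDimensional ℂ (LinearMap.range g)) :
    FiniteDimensional ℂ (LinearMap.range (f - g)) :=
  Submodule.finiteDimensional_of_le (range_sub_le f g)

lemma fr_add {f g : V →ₗ[ℂ] V} (hf : FiniteDimensional ℂ (LinearMap.range f))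
    (hg : FiniteDimensional ℂ (LinearMap.range g)) :
    FiniteDimensional ℂ (LinearMap.range (f + g)) :=
  Submodule.finiteDimensional_of_le (_root_.range_add_le f g)

lemma fr_mul_left (f : V →ₗ[ℂ] V) {g : V →ₗ[ℂ] V}
    (hg : FiniteDimensional ℂ (LinearMap.range g)) :
    FiniteDimensional ℂ (LinearMap.range (f * g)) := by
  rw [Module.End.mul_eq_comp, LinearMap.range_comp]
  exact Module.Finite.map _ _

lemma fr_mul_right {g : V →ₗ[ℂ] V} (f : V →ₗ[ℂ] V)
    (hg : FiniteDimensional ℂ (LinearMap.range g)) :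
    FiniteDimensional ℂ (LinearMap.range (g * f)) :=
  Submodule.finiteDimensional_of_le (range_mul_right_le g f)

lemma trR_sub {f g : V →ₗ[ℂ] V} (hf : FiniteDimensional ℂ (LinearMap.range f))
    (hg : FiniteDimensional ℂ (LinearMap.range g)) :
    trR (f - g) = trR f - trR g := by
  set W := LinearMap.range f ⊔ LinearMap.range g with hWdef
  rw [trR_eq f W le_sup_left, trR_eq g W le_sup_right,
    trR_eq (f - g) W (range_sub_le f g), ← map_sub]
  congr 1

lemma trR_add {f g : V →ₗ[ℂ] V} (hf : FiniteDimensional ℂ (LinearMap.range f))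
    (hg : FiniteDimensional ℂ (LinearMap.range g)) :
    trR (f + g) = trR f + trR g := by
  set W := LinearMap.range f ⊔ LinearMap.range g with hWdef
  rw [trR_eq f W le_sup_left, trR_eq g W le_sup_right,
    trR_eq (f + g) W (_root_.range_add_le f g), ← map_add]
  congr 1

lemma trR_zero : trR (0 : V →ₗ[ℂ] V) = 0 := by
  haveI : FiniteDimensional ℂ (LinearMap.range (0 : V →ₗ[ℂ] V)) := by
    rw [LinearMap.range_zero]; infer_instance
  have : (0 : V →ₗ[ℂ] V).restrict
      (fun x (_ : x ∈ LinearMap.range (0 : V →ₗ[ℂ] V)) => LinearMap.mem_range_self _ x) = 0 := by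
    ext x; rfl
  rw [trR, this, map_zero]

lemma trR_mul_comm (f : V →ₗ[ℂ] V) {g : V →ₗ[ℂ] V}
    (hg : FiniteDimensional ℂ (LinearMap.range g)) :
    trR (f * g) = trR (g * f) := by
  haveI : FiniteDimensional ℂ (LinearMap.range (f * g)) := fr_mul_left f hg
  set W := LinearMap.range g with hW
  set W' := LinearMap.range (f * g) with hW'
  let s : W →ₗ[ℂ] W' := (f.domRestrict W).codRestrict W' (by
    rintro ⟨x, y, rfl⟩
    exact ⟨y, rfl⟩)
  let t : W' →ₗ[ℂ] W := (g.domRestrict W').codRestrict W (fun x => ⟨x, rfl⟩)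
  have h1 : (f * g).restrict (fun x (_ : x ∈ W') => LinearMap.mem_range_self _ x) = s ∘ₗ t := by
    ext x; rfl
  rw [trR, h1, trR_eq (g * f) W (range_mul_right_le g f)]
  have h2' : (g * f).restrict
      (fun x hx => (range_mul_right_le g f) (LinearMap.mem_range_self (g * f) x)) = t ∘ₗ s := by
    ext x; rfl
  rw [h2', LinearMap.trace_comp_comm']

lemma trR_projection {P : V →ₗ[ℂ] V} (hP : ∀ x, P (P x) = P x)
    (h : FiniteDimensional ℂ (LinearMap.range P)) :
    trR P = Module.finrank ℂ (LinearMap.range P) := by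
  have : P.restrict (fun x (_ : x ∈ LinearMap.range P) => LinearMap.mem_range_self P x)
      = LinearMap.id := by
    ext ⟨x, y, rfl⟩
    exact hP y
  rw [trR, this, LinearMap.trace_id]

end More

section Base
variable {V : Type*} [AddCommGroup V] [Module ℂ V]

/-- An exact algebraic pseudoinverse of a linear map with finite-dimensional cokernel. -/
lemma exists_pseudoinverse (a : V →ₗ[ℂ] V)
    (hcok : FiniteDimensional ℂ (V ⧸ LinearMap.range a)) :
    ∃ b₀ : V →ₗ[ℂ] V, ∃ P Q : V →ₗ[ℂ] V,
      a * b₀ = 1 - P ∧ b₀ * a = 1 - Q ∧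
      (∀ x, P (P x) = P x) ∧ (∀ x, Q (Q x) = Q x) ∧
      LinearMap.range Q = LinearMap.ker a ∧
      FiniteDimensional ℂ (LinearMap.range P) ∧
      Module.finrank ℂ (LinearMap.range P) =
        Module.finrank ℂ (V ⧸ LinearMap.range a) := by
  obtain ⟨C, hC⟩ := (LinearMap.ker a).exists_isCompl
  obtain ⟨D, hD⟩ := (LinearMap.range a).exists_isCompl
  have eD : (V ⧸ LinearMap.range a) ≃ₗ[ℂ] D :=
    Submodule.quotientEquivOfIsCompl _ _ hD
  haveI hDfin : FiniteDimensional ℂ D := eD.finiteDimensional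
  set πC := Submodule.projectionOnto C (LinearMap.ker a) hC.symm with hπC
  set πK := Submodule.projectionOnto (LinearMap.ker a) C hC with hπK
  set πR := Submodule.projectionOnto (LinearMap.range a) D hD with hπR
  set πD := Submodule.projectionOnto D (LinearMap.range a) hD.symm with hπD
  have hCK : ∀ x : V, (πC x : V) + (πK x : V) = x := by
    intro x
    exact Submodule.projection_add_projection_eq_self hC.symm x
  have hRD : ∀ x : V, (πR x : V) + (πD x : V) = x := by
    intro x
    exact Submodule.projection_add_projection_eq_self hD x
  -- the isomorphism C ≃ range a
  let e0 : C →ₗ[ℂ] LinearMap.range a :=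
    (a.domRestrict C).codRestrict _ (fun c => ⟨c, rfl⟩)
  have haπC : ∀ x : V, a ((πC x : V)) = a x := by
    intro x
    have hker : a ((πK x : V)) = 0 := (πK x).2
    calc a ((πC x : V)) = a ((πC x : V)) + a ((πK x : V)) := by rw [hker, add_zero]
      _ = a x := by rw [← map_add, hCK]
  have hinj : Function.Injective e0 := by
    intro c c' h
    have h' : a (c : V) = a (c' : V) := congrArg Subtype.val h
    have hm : ((c : V) - c') ∈ LinearMap.ker a ⊓ C :=
      ⟨by simp [LinearMap.mem_ker, map_sub, h'], Submodule.sub_mem _ c.2 c'.2⟩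
    rw [hC.inf_eq_bot, Submodule.mem_bot] at hm
    exact Subtype.ext (sub_eq_zero.mp hm)
  have hsurj : Function.Surjective e0 := by
    rintro ⟨y, x, rfl⟩
    exact ⟨πC x, Subtype.ext (haπC x)⟩
  let e : C ≃ₗ[ℂ] LinearMap.range a := LinearEquiv.ofBijective e0 ⟨hinj, hsurj⟩
  have he : ∀ c : C, (e c : V) = a c := fun c => rfl
  -- the pseudoinverse
  let b₀ : V →ₗ[ℂ] V := C.subtype ∘ₗ (e.symm : LinearMap.range a →ₗ[ℂ] C) ∘ₗ πR
  set P : V →ₗ[ℂ] V := D.subtype ∘ₗ πD with hP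
  set Q : V →ₗ[ℂ] V := (LinearMap.ker a).subtype ∘ₗ πK with hQ
  have hb₀ : ∀ y : LinearMap.range a, b₀ ((y : V)) = (e.symm y : V) := by
    intro y
    show (C.subtype) ((e.symm (πR (y : V))) : C) = _
    rw [Submodule.projectionOnto_apply_left hD y]
    rfl
  refine ⟨b₀, P, Q, ?_, ?_, ?_, ?_, ?_, ?_, ?_⟩
  · -- a * b₀ = 1 - P
    ext x
    have h1 : a (b₀ x) = (πR x : V) := by
      show a (C.subtype (e.symm (πR x))) = _
      have := he (e.symm (πR x))
      rw [e.apply_symm_apply] at this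
      exact this.symm
    have := hRD x
    simp only [Module.End.mul_apply, LinearMap.sub_apply, Module.End.one_apply, h1]
    show (πR x : V) = x - (πD x : V)
    exact eq_sub_of_add_eq (hRD x)
  · -- b₀ * a = 1 - Q
    ext x
    have h1 : b₀ (a x) = (πC x : V) := by
      have : a x = ((⟨a x, LinearMap.mem_range_self a x⟩ : LinearMap.range a) : V) := rfl
      rw [this, hb₀]
      congr 1
      apply e.injective
      rw [e.apply_symm_apply]
      exact Subtype.ext (haπC x).symm
    simp only [Module.End.mul_apply, LinearMap.sub_apply, Module.End.one_apply, h1]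
    show (πC x : V) = x - (πK x : V)
    exact eq_sub_of_add_eq (hCK x)
  · intro x
    show ((πD (((πD x : D) : V)) : D) : V) = ((πD x : D) : V)
    rw [Submodule.projectionOnto_apply_left hD.symm]
  · intro x
    show ((πK (((πK x) : V)) : _) : V) = ((πK x : _) : V)
    rw [Submodule.projectionOnto_apply_left hC]
  · -- range Q = ker a
    apply le_antisymm
    · rintro y ⟨x, rfl⟩
      exact (πK x).2
    · intro y hy
      refine ⟨y, ?_⟩
      show ((πK y : _) : V) = y
      rw [show πK y = ⟨y, hy⟩ from Submodule.projectionOnto_apply_left hC ⟨y, hy⟩]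
  · -- range P finite dim
    refine Submodule.finiteDimensional_of_le (S₂ := D) ?_
    rintro y ⟨x, rfl⟩
    exact (πD x).2
  · -- finrank range P = finrank coker
    have hPD : LinearMap.range P = D := by
      apply le_antisymm
      · rintro y ⟨x, rfl⟩
        exact (πD x).2
      · intro y hy
        refine ⟨y, ?_⟩
        show ((πD y : D) : V) = y
        rw [show πD y = ⟨y, hy⟩ from Submodule.projectionOnto_apply_left hD.symm ⟨y, hy⟩]
    rw [hPD]
    exact (eD.finrank_eq).symm
end Base

section Fedosov
variable {V : Type*} [AddCommGroup V] [Module ℂ V]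

lemma fr_one_sub_comm {a b : V →ₗ[ℂ] V}
    (h1 : FiniteDimensional ℂ (LinearMap.range (a * b - 1)))
    (h2 : FiniteDimensional ℂ (LinearMap.range (b * a - 1))) :
    FiniteDimensional ℂ (LinearMap.range (a * b - b * a)) := by
  have : a * b - b * a = (a * b - 1) - (b * a - 1) := by noncomm_ring
  rw [this]; exact fr_sub h1 h2

/-- Fedosov's formula, algebraic version: base case. -/
lemma fedosov_base (a b : V →ₗ[ℂ] V)
    (hker : FiniteDimensional ℂ (LinearMap.ker a))
    (hcok : FiniteDimensional ℂ (V ⧸ LinearMap.range a))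
    (h1 : FiniteDimensional ℂ (LinearMap.range (a * b - 1)))
    (h2 : FiniteDimensional ℂ (LinearMap.range (b * a - 1))) :
    trR (a * b - b * a) =
      (Module.finrank ℂ (LinearMap.ker a) : ℂ) -
        (Module.finrank ℂ (V ⧸ LinearMap.range a) : ℂ) := by
  obtain ⟨b₀, P, Q, hab₀, hb₀a, hPP, hQQ, hQ, hPfin, hPrank⟩ := exists_pseudoinverse a hcok
  haveI hQfin : FiniteDimensional ℂ (LinearMap.range Q) := by rw [hQ]; exact hker
  have hP1 : a * b₀ - 1 = -P := by rw [hab₀]; noncomm_ring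
  have hQ1 : b₀ * a - 1 = -Q := by rw [hb₀a]; noncomm_ring
  have frnegP : FiniteDimensional ℂ (LinearMap.range (-P)) := by
    refine Submodule.finiteDimensional_of_le (S₂ := LinearMap.range P) ?_
    rintro y ⟨x, rfl⟩
    exact ⟨-x, by simp⟩
  have frnegQ : FiniteDimensional ℂ (LinearMap.range (-Q)) := by
    refine Submodule.finiteDimensional_of_le (S₂ := LinearMap.range Q) ?_
    rintro y ⟨x, rfl⟩
    exact ⟨-x, by simp⟩
  have h1' : FiniteDimensional ℂ (LinearMap.range (a * b₀ - 1)) := by rw [hP1]; exact frnegP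
  have h2' : FiniteDimensional ℂ (LinearMap.range (b₀ * a - 1)) := by rw [hQ1]; exact frnegQ
  -- the pseudoinverse commutator
  have hcomm₀ : a * b₀ - b₀ * a = Q - P := by rw [hab₀, hb₀a]; noncomm_ring
  have step1 : trR (a * b₀ - b₀ * a) =
      (Module.finrank ℂ (LinearMap.ker a) : ℂ) -
        (Module.finrank ℂ (V ⧸ LinearMap.range a) : ℂ) := by
    rw [hcomm₀, trR_sub hQfin hPfin, trR_projection hQQ hQfin, trR_projection hPP hPfin,
      hPrank]
    congr 2
    rw [hQ]
  -- independence of the parametrix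
  set F := b - b₀ with hF
  have hFfr : FiniteDimensional ℂ (LinearMap.range F) := by
    have : F = (b * a - 1) * b₀ - b * (a * b₀ - 1) := by rw [hF]; noncomm_ring
    rw [this]
    exact fr_sub (fr_mul_right b₀ h2) (fr_mul_left b h1')
  have hd : (a * b - b * a) - (a * b₀ - b₀ * a) = a * F - F * a := by
    rw [hF]; noncomm_ring
  have frc1 : FiniteDimensional ℂ (LinearMap.range (a * b - b * a)) := fr_one_sub_comm h1 h2
  have frc2 : FiniteDimensional ℂ (LinearMap.range (a * b₀ - b₀ * a)) := fr_one_sub_comm h1' h2'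
  have : trR (a * b - b * a) - trR (a * b₀ - b₀ * a) = 0 := by
    rw [← trR_sub frc1 frc2, hd, trR_sub (fr_mul_left a hFfr) (fr_mul_right a hFfr),
      trR_mul_comm a hFfr, sub_self]
  rw [sub_eq_zero] at this
  rw [this, step1]

lemma pow_param (a b : V →ₗ[ℂ] V)
    (h1 : FiniteDimensional ℂ (LinearMap.range (a * b - 1)))
    (h2 : FiniteDimensional ℂ (LinearMap.range (b * a - 1))) (k : ℕ) :
    FiniteDimensional ℂ (LinearMap.range (a ^ k * b ^ k - 1)) ∧
      FiniteDimensional ℂ (LinearMap.range (b ^ k * a ^ k - 1)) := by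
  induction k with
  | zero =>
    have h0 : FiniteDimensional ℂ (LinearMap.range (0 : V →ₗ[ℂ] V)) := by
      rw [LinearMap.range_zero]; infer_instance
    constructor
    · have hz : a ^ 0 * b ^ 0 - 1 = (0 : V →ₗ[ℂ] V) := by simp
      rw [hz]; exact h0
    · have hz : b ^ 0 * a ^ 0 - 1 = (0 : V →ₗ[ℂ] V) := by simp
      rw [hz]; exact h0
  | succ k ih =>
    obtain ⟨ihK, ihK'⟩ := ih
    constructor
    · have : a ^ (k + 1) * b ^ (k + 1) - 1 =
          a * (a ^ k * b ^ k - 1) * b + (a * b - 1) := by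
        rw [pow_succ' a k, pow_succ b k]; noncomm_ring
      rw [this]
      exact fr_add (fr_mul_right b (fr_mul_left a ihK)) h1
    · have : b ^ (k + 1) * a ^ (k + 1) - 1 =
          b ^ k * (b * a - 1) * a ^ k + (b ^ k * a ^ k - 1) := by
        rw [pow_succ b k, pow_succ' a k]; noncomm_ring
      rw [this]
      exact fr_add (fr_mul_right (a ^ k) (fr_mul_left (b ^ k) h2)) ihK'

/-- Fedosov's formula for powers. -/
lemma fedosov_pow (a b : V →ₗ[ℂ] V)
    (hker : FiniteDimensional ℂ (LinearMap.ker a))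
    (hcok : FiniteDimensional ℂ (V ⧸ LinearMap.range a))
    (h1 : FiniteDimensional ℂ (LinearMap.range (a * b - 1)))
    (h2 : FiniteDimensional ℂ (LinearMap.range (b * a - 1))) (p : ℕ) :
    FiniteDimensional ℂ (LinearMap.range (a ^ p * b ^ p - b ^ p * a ^ p)) ∧
      trR (a ^ p * b ^ p - b ^ p * a ^ p) =
        (p : ℂ) * ((Module.finrank ℂ (LinearMap.ker a) : ℂ) -
          (Module.finrank ℂ (V ⧸ LinearMap.range a) : ℂ)) := by
  induction p with
  | zero =>
    have hz : a ^ 0 * b ^ 0 - b ^ 0 * a ^ 0 = 0 := by simp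
    rw [hz]
    refine ⟨?_, by rw [trR_zero]; simp⟩
    rw [LinearMap.range_zero]; infer_instance
  | succ k ih =>
    obtain ⟨ihfr, ihtr⟩ := ih
    obtain ⟨hKfr, _⟩ := pow_param a b h1 h2 k
    obtain ⟨hpfr1, hpfr2⟩ := pow_param a b h1 h2 (k + 1)
    have frcomm : FiniteDimensional ℂ
        (LinearMap.range (a ^ (k+1) * b ^ (k+1) - b ^ (k+1) * a ^ (k+1))) :=
      fr_one_sub_comm hpfr1 hpfr2
    refine ⟨frcomm, ?_⟩
    set K := a ^ k * b ^ k - 1 with hK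
    set K' := b * a - 1 with hK'
    have frbka : FiniteDimensional ℂ (LinearMap.range (a * b - b ^ k * a ^ k)) := by
      have : a * b - b ^ k * a ^ k = (a * b - 1) - (b ^ k * a ^ k - 1) := by noncomm_ring
      rw [this]
      exact fr_sub h1 (pow_param a b h1 h2 k).2
    have frKb : FiniteDimensional ℂ (LinearMap.range (K * b)) := fr_mul_right b hKfr
    have frKa : FiniteDimensional ℂ (LinearMap.range (K' * a ^ k)) := fr_mul_right (a ^ k) h2
    have fraKb : FiniteDimensional ℂ (LinearMap.range (a * (K * b))) := fr_mul_left a frKb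
    have frbKa : FiniteDimensional ℂ (LinearMap.range (b ^ k * (K' * a ^ k))) :=
      fr_mul_left (b ^ k) frKa
    have e1 : a ^ (k+1) * b ^ (k+1) - b ^ (k+1) * a ^ (k+1) =
        (a * b - b ^ k * a ^ k) + (a * (K * b) - b ^ k * (K' * a ^ k)) := by
      rw [hK, hK', pow_succ' a k, pow_succ b k]; noncomm_ring
    rw [e1, trR_add frbka (fr_sub fraKb frbKa), trR_sub fraKb frbKa]
    -- trace of a * (K * b)
    have t1 : trR (a * (K * b)) = trR (K * K') + trR K := by
      rw [trR_mul_comm a frKb]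
      have : K * b * a = K * K' + K := by rw [hK']; noncomm_ring
      rw [this, trR_add (fr_mul_left K h2) hKfr]
    -- trace of b ^ k * (K' * a ^ k)
    have t2 : trR (b ^ k * (K' * a ^ k)) = trR (K' * K) + trR K' := by
      rw [trR_mul_comm (b ^ k) frKa]
      have : K' * a ^ k * b ^ k = K' * K + K' := by rw [hK]; noncomm_ring
      rw [this, trR_add (fr_mul_left K' hKfr) h2]
    have t3 : trR (K * K') = trR (K' * K) := trR_mul_comm K h2
    rw [t1, t2, t3]
    have step : trR (a * b - b ^ k * a ^ k) + (trR (K' * K) + trR K - (trR (K' * K) + trR K'))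
        = trR (a * b - b ^ k * a ^ k) + trR K - trR K' := by ring
    rw [step]
    have merge1 : trR (a * b - b ^ k * a ^ k) + trR K = trR ((a * b - b ^ k * a ^ k) + K) :=
      (trR_add frbka hKfr).symm
    have merge2 : trR ((a * b - b ^ k * a ^ k) + K) - trR K' =
        trR (((a * b - b ^ k * a ^ k) + K) - K') :=
      (trR_sub (fr_add frbka hKfr) h2).symm
    rw [merge1, merge2]
    have e2 : ((a * b - b ^ k * a ^ k) + K) - K' =
        (a * b - b * a) + (a ^ k * b ^ k - b ^ k * a ^ k) := by
      rw [hK, hK']; noncomm_ring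
    rw [e2, trR_add (fr_one_sub_comm h1 h2) ihfr, ihtr,
      fedosov_base a b hker hcok h1 h2]
    push_cast
    ring
end Fedosov

section Transfer
variable {X : Type*} [AddCommGroup X] [Module ℂ X]

lemma transfer (M N : Submodule ℂ X) (hcompl : IsCompl M N)
    (f : X →ₗ[ℂ] X) (g : M →ₗ[ℂ] M)
    (h1 : ∀ m : M, f m = (g m : X)) (h2 : ∀ x ∈ N, f x = 0)
    (hfr : FiniteDimensional ℂ (LinearMap.range g)) :
    FiniteDimensional ℂ (LinearMap.range f) ∧ trR f = trR g := by
  set W := Submodule.map M.subtype (LinearMap.range g) with hWdef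
  haveI : FiniteDimensional ℂ W := Module.Finite.map _ _
  have hrange : LinearMap.range f ≤ W := by
    rintro y ⟨x, rfl⟩
    have hx : x ∈ M ⊔ N := by rw [hcompl.sup_eq_top]; trivial
    obtain ⟨m, hm, n, hn, rfl⟩ := Submodule.mem_sup.mp hx
    rw [map_add, h2 n hn, add_zero, h1 ⟨m, hm⟩]
    exact ⟨g ⟨m, hm⟩, LinearMap.mem_range_self g _, rfl⟩
  constructor
  · exact Submodule.finiteDimensional_of_le hrange
  · rw [trR_eq f W hrange]
    set E := Submodule.equivMapOfInjective M.subtype M.injective_subtype (LinearMap.range g)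
      with hE
    have hrestrict : f.restrict (fun x _ => hrange (LinearMap.mem_range_self f x)) =
        E.conj (g.restrict (fun x (_ : x ∈ LinearMap.range g) =>
          LinearMap.mem_range_self g x)) := by
      apply LinearMap.ext
      intro y
      apply Subtype.ext
      have hy : ((E.symm y : M) : X) = (y : X) := by
        conv_rhs => rw [← E.apply_symm_apply y]
        exact (Submodule.coe_equivMapOfInjective_apply M.subtype M.injective_subtype (LinearMap.range g) (E.symm y)).symm
      show f (y : X) = _
      rw [LinearEquiv.conj_apply]
      show f (y : X) = ((E ((g.restrict _) (E.symm y))) : X)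
      rw [Submodule.coe_equivMapOfInjective_apply]
      show f (y : X) = ((g ((E.symm y : M)) : M) : X)
      rw [← hy, h1]
    rw [hrestrict, LinearMap.trace_conj']
    rfl
end Transfer



/-- With `X = M ⊕ N`, `T|_N` nilpotent of order `p`, `T|_M` Fredholm with
parametrix `T₀`, and `S = T₀ ⊕ 0`, the operator `T^p S^p - S^p T^p` is of finite
rank and its trace equals `p · ind(T|_M)`. -/
theorem trace_commutator_pow
    {X : Type*} [NormedAddCommGroup X] [NormedSpace ℂ X] [CompleteSpace X]
    (T : X →L[ℂ] X) (M N : Submodule ℂ X)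
    (hMclosed : IsClosed (M : Set X)) (hNclosed : IsClosed (N : Set X))
    (hcompl : IsCompl M N)
    (hTM : ∀ x ∈ M, T x ∈ M) (hTN : ∀ x ∈ N, T x ∈ N)
    -- `T|_N` is nilpotent of order `p`
    (p : ℕ) (hnil : ∀ x ∈ N, (T ^ p) x = 0)
    -- `TM` is the restriction `T|_M`, and it is Fredholm
    (TM : M →L[ℂ] M) (hTMdef : ∀ x : M, (TM x : X) = T x)
    (hker : FiniteDimensional ℂ (LinearMap.ker (TM : M →ₗ[ℂ] M)))
    (hclosed : IsClosed (LinearMap.range (TM : M →ₗ[ℂ] M) : Set M))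
    (hcoker : FiniteDimensional ℂ (M ⧸ LinearMap.range (TM : M →ₗ[ℂ] M)))
    -- `T₀` is an inverse of `T|_M` modulo the finite-rank operators on `M`
    (T₀ : M →L[ℂ] M)
    (hT₀₁ : FiniteDimensional ℂ (LinearMap.range ((TM * T₀ - 1 : M →L[ℂ] M) : M →ₗ[ℂ] M)))
    (hT₀₂ : FiniteDimensional ℂ (LinearMap.range ((T₀ * TM - 1 : M →L[ℂ] M) : M →ₗ[ℂ] M)))
    -- `S = T₀ ⊕ 0`
    (S : X →L[ℂ] X) (hSM : ∀ x : M, S x = (T₀ x : X)) (hSN : ∀ x ∈ N, S x = 0) :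
    IsFiniteRank (T ^ p * S ^ p - S ^ p * T ^ p) ∧
      trF (T ^ p * S ^ p - S ^ p * T ^ p) =
        ((p : ℤ) * ((Module.finrank ℂ (LinearMap.ker (TM : M →ₗ[ℂ] M)) : ℤ) -
          (Module.finrank ℂ (M ⧸ LinearMap.range (TM : M →ₗ[ℂ] M)) : ℤ)) : ℤ) := by
  set a : M →ₗ[ℂ] M := (TM : M →ₗ[ℂ] M) with ha
  set b : M →ₗ[ℂ] M := (T₀ : M →ₗ[ℂ] M) with hb
  have h1 : FiniteDimensional ℂ (LinearMap.range (a * b - 1)) := by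
    have : ((TM * T₀ - 1 : M →L[ℂ] M) : M →ₗ[ℂ] M) = a * b - 1 := by
      ext x; rfl
    rwa [this] at hT₀₁
  have h2 : FiniteDimensional ℂ (LinearMap.range (b * a - 1)) := by
    have : ((T₀ * TM - 1 : M →L[ℂ] M) : M →ₗ[ℂ] M) = b * a - 1 := by
      ext x; rfl
    rwa [this] at hT₀₂
  set f : X →ₗ[ℂ] X := ((T ^ p * S ^ p - S ^ p * T ^ p : X →L[ℂ] X) : X →ₗ[ℂ] X) with hf
  set g : M →ₗ[ℂ] M := a ^ p * b ^ p - b ^ p * a ^ p with hg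
  -- power compatibility
  have hTpow : ∀ (k : ℕ) (m : M), (T ^ k) (m : X) = (((TM ^ k) m : M) : X) := by
    intro k
    induction k with
    | zero => intro m; simp
    | succ k ih =>
      intro m
      rw [pow_succ' T k, pow_succ' TM k]
      show T ((T ^ k) (m : X)) = ((TM ((TM ^ k) m) : M) : X)
      rw [ih m, hTMdef]
  have hSpow : ∀ (k : ℕ) (m : M), (S ^ k) (m : X) = (((T₀ ^ k) m : M) : X) := by
    intro k
    induction k with
    | zero => intro m; simp
    | succ k ih =>
      intro m
      rw [pow_succ' S k, pow_succ' T₀ k]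
      show S ((S ^ k) (m : X)) = ((T₀ ((T₀ ^ k) m) : M) : X)
      rw [ih m, hSM]
  have hapow : ∀ (k : ℕ) (m : M), (a ^ k) m = (TM ^ k) m := by
    intro k
    induction k with
    | zero => intro m; rfl
    | succ k ih =>
      intro m
      rw [pow_succ' a k, pow_succ' TM k]
      show a ((a ^ k) m) = TM ((TM ^ k) m)
      rw [ih m]; rfl
  have hbpow : ∀ (k : ℕ) (m : M), (b ^ k) m = (T₀ ^ k) m := by
    intro k
    induction k with
    | zero => intro m; rfl
    | succ k ih =>
      intro m
      rw [pow_succ' b k, pow_succ' T₀ k]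
      show b ((b ^ k) m) = T₀ ((T₀ ^ k) m)
      rw [ih m]; rfl
  have h1trans : ∀ m : M, f (m : X) = ((g m : M) : X) := by
    intro m
    show (T ^ p) ((S ^ p) (m : X)) - (S ^ p) ((T ^ p) (m : X))
        = (((a ^ p * b ^ p - b ^ p * a ^ p) m : M) : X)
    rw [hSpow p m, hTpow p m, hTpow p ((T₀ ^ p) m), hSpow p ((TM ^ p) m)]
    have : (a ^ p * b ^ p - b ^ p * a ^ p) m
        = (TM ^ p) ((T₀ ^ p) m) - (T₀ ^ p) ((TM ^ p) m) := by
      show (a ^ p) ((b ^ p) m) - (b ^ p) ((a ^ p) m) = _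
      rw [hapow, hbpow, hbpow, hapow]
    rw [this, Submodule.coe_sub]
  have h2trans : ∀ x ∈ N, f x = 0 := by
    intro x hx
    show (T ^ p) ((S ^ p) x) - (S ^ p) ((T ^ p) x) = 0
    rcases p with _ | k
    · simp
    · have hS0 : (S ^ (k + 1)) x = 0 := by
        rw [pow_succ S k]
        show (S ^ k) (S x) = 0
        rw [hSN x hx, map_zero]
      rw [hS0, hnil x hx, map_zero, map_zero, sub_zero]
  obtain ⟨frg, trg⟩ := fedosov_pow a b hker hcoker h1 h2 p
  obtain ⟨frf, trf⟩ := transfer M N hcompl f g h1trans h2trans frg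
  refine ⟨frf, ?_⟩
  have : trF (T ^ p * S ^ p - S ^ p * T ^ p) = trR f := rfl
  rw [this, trf, trg]
  push_cast
  ring
end

section
/- Let T be a Fredholm operator on a Banach space X, S a parametrix (TS - I, ST - I finite-rank), and λ ∈ ℂ nonzero with |λ| < ε for suitable ε (smaller than the reciprocal of the norm of S and such that T - λI remains Fredholm). Then tr((T-λI)S' - S'(T-λI)) = tr(TS - ST) for any parametrix S' of T - λI; equivalently, the trace-index of T - λI equals the trace-index of T for small nonzero λ. -/
section Aux

variable {X : Type*} [NormedAddCommGroup X] [NormedSpace ℂ X]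

private lemma coe_mul' (F G : X →L[ℂ] X) :
    ((F * G : X →L[ℂ] X) : X →ₗ[ℂ] X) = (F : X →ₗ[ℂ] X) ∘ₗ (G : X →ₗ[ℂ] X) := rfl

private lemma fr_mul_left_s14 (A : X →L[ℂ] X) {F : X →L[ℂ] X} (hF : IsFiniteRank F) :
    IsFiniteRank (A * F) := by
  haveI : FiniteDimensional ℂ (LinearMap.range (F : X →ₗ[ℂ] X)) := hF
  rw [IsFiniteRank, coe_mul', LinearMap.range_comp]
  infer_instance

private lemma fr_mul_right_s14 {F : X →L[ℂ] X} (hF : IsFiniteRank F) (A : X →L[ℂ] X) :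
    IsFiniteRank (F * A) := by
  haveI : FiniteDimensional ℂ (LinearMap.range (F : X →ₗ[ℂ] X)) := hF
  refine Submodule.finiteDimensional_of_le (?_ : _ ≤ LinearMap.range (F : X →ₗ[ℂ] X))
  rw [coe_mul', LinearMap.range_comp]
  exact LinearMap.map_le_range

private lemma fr_add_s14 {F G : X →L[ℂ] X} (hF : IsFiniteRank F) (hG : IsFiniteRank G) :
    IsFiniteRank (F + G) := by
  haveI : FiniteDimensional ℂ (LinearMap.range (F : X →ₗ[ℂ] X)) := hF
  haveI : FiniteDimensional ℂ (LinearMap.range (G : X →ₗ[ℂ] X)) := hG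
  refine Submodule.finiteDimensional_of_le
    (?_ : _ ≤ LinearMap.range (F : X →ₗ[ℂ] X) ⊔ LinearMap.range (G : X →ₗ[ℂ] X))
  rintro x ⟨y, rfl⟩
  exact Submodule.add_mem_sup (LinearMap.mem_range_self _ y) (LinearMap.mem_range_self _ y)

private lemma fr_neg {F : X →L[ℂ] X} (hF : IsFiniteRank F) : IsFiniteRank (-F) := by
  haveI : FiniteDimensional ℂ (LinearMap.range (F : X →ₗ[ℂ] X)) := hF
  refine Submodule.finiteDimensional_of_le (?_ : _ ≤ LinearMap.range (F : X →ₗ[ℂ] X))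
  rintro x ⟨y, rfl⟩
  exact Submodule.neg_mem _ (LinearMap.mem_range_self _ y)

private lemma fr_sub_s14 {F G : X →L[ℂ] X} (hF : IsFiniteRank F) (hG : IsFiniteRank G) :
    IsFiniteRank (F - G) := by
  rw [sub_eq_add_neg]; exact fr_add_s14 hF (fr_neg hG)

private lemma fr_smul (c : ℂ) {F : X →L[ℂ] X} (hF : IsFiniteRank F) :
    IsFiniteRank (c • F) := by
  haveI : FiniteDimensional ℂ (LinearMap.range (F : X →ₗ[ℂ] X)) := hF
  refine Submodule.finiteDimensional_of_le (?_ : _ ≤ LinearMap.range (F : X →ₗ[ℂ] X))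
  rintro x ⟨y, rfl⟩
  exact Submodule.smul_mem _ c (LinearMap.mem_range_self _ y)

private lemma trF_eq_on (F : X →L[ℂ] X) (p : Submodule ℂ X) [FiniteDimensional ℂ p]
    (h : LinearMap.range (F : X →ₗ[ℂ] X) ≤ p) :
    trF F = LinearMap.trace ℂ p ((F : X →ₗ[ℂ] X).restrict
      (fun x _ => h (LinearMap.mem_range_self _ x))) := by
  set q := LinearMap.range (F : X →ₗ[ℂ] X) with hq
  haveI : FiniteDimensional ℂ q := Submodule.finiteDimensional_of_le h
  let i : q →ₗ[ℂ] p := Submodule.inclusion h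
  let A : p →ₗ[ℂ] q := ((F : X →ₗ[ℂ] X).domRestrict p).codRestrict q
    (fun x => LinearMap.mem_range_self _ _)
  have h1 : (F : X →ₗ[ℂ] X).restrict
      (fun x (_ : x ∈ p) => h (LinearMap.mem_range_self (F : X →ₗ[ℂ] X) x)) = i ∘ₗ A := by
    ext x; rfl
  have h2 : (F : X →ₗ[ℂ] X).restrict
      (fun x (_ : x ∈ q) => LinearMap.mem_range_self (F : X →ₗ[ℂ] X) x) = A ∘ₗ i := by
    ext x; rfl
  rw [trF, h2, h1, LinearMap.trace_comp_comm']

private lemma trF_add {F G : X →L[ℂ] X} (hF : IsFiniteRank F) (hG : IsFiniteRank G) :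
    trF (F + G) = trF F + trF G := by
  haveI : FiniteDimensional ℂ (LinearMap.range (F : X →ₗ[ℂ] X)) := hF
  haveI : FiniteDimensional ℂ (LinearMap.range (G : X →ₗ[ℂ] X)) := hG
  set p := LinearMap.range (F : X →ₗ[ℂ] X) ⊔ LinearMap.range (G : X →ₗ[ℂ] X) with hp
  have hFp : LinearMap.range (F : X →ₗ[ℂ] X) ≤ p := le_sup_left
  have hGp : LinearMap.range (G : X →ₗ[ℂ] X) ≤ p := le_sup_right
  have hFGp : LinearMap.range ((F + G : X →L[ℂ] X) : X →ₗ[ℂ] X) ≤ p := by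
    rintro x ⟨y, rfl⟩
    exact Submodule.add_mem_sup (LinearMap.mem_range_self _ y) (LinearMap.mem_range_self _ y)
  rw [trF_eq_on F p hFp, trF_eq_on G p hGp, trF_eq_on (F + G) p hFGp]
  have : ((F + G : X →L[ℂ] X) : X →ₗ[ℂ] X).restrict (p := p) (q := p)
        (fun x _ => hFGp (LinearMap.mem_range_self _ x)) =
      (F : X →ₗ[ℂ] X).restrict (p := p) (q := p)
        (fun x _ => hFp (LinearMap.mem_range_self _ x)) +
      (G : X →ₗ[ℂ] X).restrict (p := p) (q := p)
        (fun x _ => hGp (LinearMap.mem_range_self _ x)) := by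
    ext x; rfl
  rw [this, map_add]

private lemma trF_smul (c : ℂ) {F : X →L[ℂ] X} (hF : IsFiniteRank F) :
    trF (c • F) = c * trF F := by
  haveI : FiniteDimensional ℂ (LinearMap.range (F : X →ₗ[ℂ] X)) := hF
  have hcp : LinearMap.range ((c • F : X →L[ℂ] X) : X →ₗ[ℂ] X)
      ≤ LinearMap.range (F : X →ₗ[ℂ] X) := by
    rintro x ⟨y, rfl⟩
    exact Submodule.smul_mem _ c (LinearMap.mem_range_self _ y)
  rw [trF_eq_on (c • F) _ hcp, trF]
  have : ((c • F : X →L[ℂ] X) : X →ₗ[ℂ] X).restrict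
      (p := LinearMap.range (F : X →ₗ[ℂ] X)) (q := LinearMap.range (F : X →ₗ[ℂ] X))
      (fun x _ => hcp (LinearMap.mem_range_self _ x)) =
      c • ((F : X →ₗ[ℂ] X).restrict
        (fun x (_ : x ∈ LinearMap.range (F : X →ₗ[ℂ] X)) =>
          LinearMap.mem_range_self (F : X →ₗ[ℂ] X) x)) := by
    ext x
    show c • F x = c • F x
    rfl
  rw [this, map_smul, smul_eq_mul]

private lemma trF_sub {F G : X →L[ℂ] X} (hF : IsFiniteRank F) (hG : IsFiniteRank G) :
    trF (F - G) = trF F - trF G := by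
  have hnG : IsFiniteRank ((-1 : ℂ) • G) := fr_smul _ hG
  have h1 : F - G = F + (-1 : ℂ) • G := by rw [neg_one_smul]; abel
  rw [h1, trF_add hF hnG, trF_smul _ hG]
  ring

private lemma trF_comm (A : X →L[ℂ] X) {F : X →L[ℂ] X} (hF : IsFiniteRank F) :
    trF (A * F) = trF (F * A) := by
  set q := LinearMap.range (F : X →ₗ[ℂ] X) with hq
  haveI : FiniteDimensional ℂ q := hF
  set q' := q.map (A : X →ₗ[ℂ] X) with hq'
  haveI : FiniteDimensional ℂ q' := Module.Finite.map q (A : X →ₗ[ℂ] X)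
  let f : q →ₗ[ℂ] q' := ((A : X →ₗ[ℂ] X).domRestrict q).codRestrict q'
    (fun x => Submodule.mem_map_of_mem x.2)
  let g : q' →ₗ[ℂ] q := ((F : X →ₗ[ℂ] X).domRestrict q').codRestrict q
    (fun x => LinearMap.mem_range_self _ _)
  have hFA : LinearMap.range ((F * A : X →L[ℂ] X) : X →ₗ[ℂ] X) ≤ q := by
    rw [coe_mul', LinearMap.range_comp]
    exact LinearMap.map_le_range
  have hAF : LinearMap.range ((A * F : X →L[ℂ] X) : X →ₗ[ℂ] X) ≤ q' := by
    rw [coe_mul', LinearMap.range_comp, hq']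
  rw [trF_eq_on (F * A) q hFA, trF_eq_on (A * F) q' hAF]
  have h1 : ((F * A : X →L[ℂ] X) : X →ₗ[ℂ] X).restrict (p := q) (q := q)
      (fun x _ => hFA (LinearMap.mem_range_self _ x)) = g ∘ₗ f := by
    ext x; rfl
  have h2 : ((A * F : X →L[ℂ] X) : X →ₗ[ℂ] X).restrict (p := q') (q := q')
      (fun x _ => hAF (LinearMap.mem_range_self _ x)) = f ∘ₗ g := by
    ext x; rfl
  rw [h1, h2, LinearMap.trace_comp_comm']

end Aux

/-- For a Fredholm operator `T` with parametrix `S`, the trace-index of `T - λI`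
equals the trace-index of `T` for all sufficiently small nonzero `λ`. -/
theorem trace_index_locally_constant
    {X : Type*} [NormedAddCommGroup X] [NormedSpace ℂ X] [CompleteSpace X]
    (T S : X →L[ℂ] X)
    (hker : FiniteDimensional ℂ (LinearMap.ker (T : X →ₗ[ℂ] X)))
    (hclosed : IsClosed (LinearMap.range (T : X →ₗ[ℂ] X) : Set X))
    (hcoker : FiniteDimensional ℂ (X ⧸ LinearMap.range (T : X →ₗ[ℂ] X)))
    (hTS : IsFiniteRank (T * S - 1)) (hST : IsFiniteRank (S * T - 1)) :
    ∃ ε > 0, ∀ lam : ℂ, lam ≠ 0 → ‖lam‖ < ε →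
      ∀ S' : X →L[ℂ] X,
        IsFiniteRank ((T - lam • 1) * S' - 1) → IsFiniteRank (S' * (T - lam • 1) - 1) →
        trF ((T - lam • 1) * S' - S' * (T - lam • 1)) = trF (T * S - S * T) := by
  have hSpos : (0 : ℝ) < ‖S‖ + 1 := by positivity
  refine ⟨(‖S‖ + 1)⁻¹, by positivity, ?_⟩
  intro lam _hlam hnorm S' hS'1 hS'2
  -- the Neumann series inverse of 1 - lam • S
  have hsmall : ‖lam • S‖ < 1 := by
    have hns : ‖lam • S‖ = ‖lam‖ * ‖S‖ := norm_smul lam S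
    rw [hns]
    calc ‖lam‖ * ‖S‖ ≤ ‖lam‖ * (‖S‖ + 1) :=
          mul_le_mul_of_nonneg_left (by linarith) (norm_nonneg lam)
      _ < (‖S‖ + 1)⁻¹ * (‖S‖ + 1) := mul_lt_mul_of_pos_right hnorm hSpos
      _ = 1 := inv_mul_cancel₀ hSpos.ne'
  set u : (X →L[ℂ] X)ˣ := Units.oneSub (lam • S) hsmall with hu
  set R : X →L[ℂ] X := ↑u⁻¹ with hR
  have huR : (1 - lam • S) * R = 1 := by
    have h := u.mul_inv
    rwa [hu, Units.val_oneSub] at h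
  have hRu : R * (1 - lam • S) = 1 := by
    have h := u.inv_mul
    rwa [hu, Units.val_oneSub] at h
  have hc : (1 - lam • S) * S = S * (1 - lam • S) := by
    simp [sub_mul, mul_sub, smul_mul_assoc, mul_smul_comm]
  have hSR : S * R = R * S := by
    calc S * R = (R * (1 - lam • S)) * (S * R) := by rw [hRu, one_mul]
      _ = R * ((1 - lam • S) * S) * R := by noncomm_ring
      _ = R * (S * (1 - lam • S)) * R := by rw [hc]
      _ = (R * S) * ((1 - lam • S) * R) := by noncomm_ring
      _ = R * S := by rw [huR, mul_one]
  have hR1 : R = 1 + lam • (S * R) := by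
    have h : (1 - lam • S) * R = R - lam • (S * R) := by
      simp [sub_mul, smul_mul_assoc]
    rw [h] at huR
    exact sub_eq_iff_eq_add.mp huR
  -- notation
  set T' : X →L[ℂ] X := T - lam • 1 with hT'
  set K : X →L[ℂ] X := T * S - 1 with hK
  set K' : X →L[ℂ] X := S * T - 1 with hK'
  set D : X →L[ℂ] X := S' - S * R with hDdef
  -- parametrix identities for T'
  have e1 : T' * (S * R) - 1 = K * R := by
    have h : T' * (S * R) = K * R + (1 - lam • S) * R := by
      rw [hT', hK]
      simp only [sub_mul, mul_sub, one_mul, mul_one, smul_mul_assoc, mul_smul_comm, mul_assoc]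
      abel
    rw [h, huR, add_sub_cancel_right]
  have e2 : (S * R) * T' - 1 = R * K' := by
    have h : (S * R) * T' = R * K' + R * (1 - lam • S) := by
      rw [hSR, hT', hK']
      simp only [sub_mul, mul_sub, one_mul, mul_one, smul_mul_assoc, mul_smul_comm, mul_assoc]
      abel
    rw [h, hRu, add_sub_cancel_right]
  -- finite-rank facts
  have frK : IsFiniteRank K := hTS
  have frK' : IsFiniteRank K' := hST
  have frKR : IsFiniteRank (K * R) := fr_mul_right_s14 frK R
  have frRK' : IsFiniteRank (R * K') := fr_mul_left_s14 R frK'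
  have hD : D = (S' * T' - 1) * (S * R) - S' * (T' * (S * R) - 1) := by
    rw [hDdef]; noncomm_ring
  have frD : IsFiniteRank D := by
    rw [hD]
    exact fr_sub_s14 (fr_mul_right_s14 hS'2 (S * R)) (fr_mul_left_s14 S' (e1 ▸ frKR))
  -- split the commutator
  have hS'eq : S' = S * R + D := by rw [hDdef]; abel
  have hsplit : T' * S' - S' * T' = (T' * (S * R) - (S * R) * T') + (T' * D - D * T') := by
    rw [hS'eq]; noncomm_ring
  have hcomm1 : T' * (S * R) - (S * R) * T' = K * R - R * K' := by
    rw [← e1, ← e2]; abel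
  have fr1 : IsFiniteRank (T' * (S * R) - (S * R) * T') := by
    rw [hcomm1]; exact fr_sub_s14 frKR frRK'
  have fr2 : IsFiniteRank (T' * D - D * T') :=
    fr_sub_s14 (fr_mul_left_s14 T' frD) (fr_mul_right_s14 frD T')
  -- second summand has zero trace
  have h2zero : trF (T' * D - D * T') = 0 := by
    rw [trF_sub (fr_mul_left_s14 T' frD) (fr_mul_right_s14 frD T'), trF_comm T' frD, sub_self]
  -- first summand: expand R = 1 + lam • (S * R)
  have hKRsplit : K * R - R * K' = (K - K') + lam • (K * (S * R) - S * (R * K')) := by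
    have hA : K * R = K + lam • (K * (S * R)) := by
      conv_lhs => rw [hR1]
      simp [mul_add, mul_smul_comm, mul_one, mul_assoc]
    have hB : R * K' = K' + lam • (S * (R * K')) := by
      conv_lhs => rw [hR1]
      simp [add_mul, smul_mul_assoc, one_mul, mul_assoc]
    conv_lhs => rw [hA, hB]
    rw [smul_sub]
    abel
  have frKSR : IsFiniteRank (K * (S * R)) := fr_mul_right_s14 frK _
  have frSRK' : IsFiniteRank (S * (R * K')) := fr_mul_left_s14 S frRK'
  have hcyc : trF (K * (S * R)) = trF (S * (R * K')) := by
    have hSK : S * K = K' * S := by rw [hK, hK']; noncomm_ring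
    have hmove : (S * R) * K = (R * K') * S := by
      calc (S * R) * K = R * (S * K) := by rw [hSR, mul_assoc]
        _ = R * (K' * S) := by rw [hSK]
        _ = (R * K') * S := by rw [mul_assoc]
    calc trF (K * (S * R)) = trF ((S * R) * K) := (trF_comm (S * R) frK).symm
      _ = trF ((R * K') * S) := by rw [hmove]
      _ = trF (S * (R * K')) := (trF_comm S frRK').symm
  -- put everything together
  have hKK' : K - K' = T * S - S * T := by rw [hK, hK']; abel
  calc trF (T' * S' - S' * T')
      = trF (T' * (S * R) - (S * R) * T') + trF (T' * D - D * T') := by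
        rw [hsplit, trF_add fr1 fr2]
    _ = trF (K * R - R * K') := by rw [h2zero, add_zero, hcomm1]
    _ = trF (K - K') + lam * (trF (K * (S * R)) - trF (S * (R * K'))) := by
        rw [hKRsplit, trF_add (fr_sub_s14 frK frK') (fr_smul _ (fr_sub_s14 frKSR frSRK')),
          trF_smul _ (fr_sub_s14 frKSR frSRK'), trF_sub frKSR frSRK']
    _ = trF (K - K') := by rw [hcyc, sub_self, mul_zero, add_zero]
    _ = trF (T * S - S * T) := by rw [hKK']
end
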